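/- arXiv:2301.05703 — 5 statements merged into one kernel-verified Lean document; each statement's English description precedes it below -/
import Mathlib

section
/- Under unconfoundedness, SUTVA and population overlap, the conditional expectation given X of e(X)(1−e(X))τ(X) − (W−e(X))Y is zero almost surely; that is, E[e(X)(1−e(X))τ(X) − (W−e(X))Y | σ(X)] = 0 a.s. -/
open MeasureTheory ProbabilityTheory Filter Set
open scoped Topology

/-- The sub-σ-algebra σ(X) generated by a random element `X`. -/
abbrev sigmaAlg {Ω 𝒳 : Type*} [m𝒳 : MeasurableSpace 𝒳] (X : Ω → 𝒳) : MeasurableSpace Ω :=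
  MeasurableSpace.comap X m𝒳

section Aux

variable {Ω : Type*} {m' : MeasurableSpace Ω} [mΩ : MeasurableSpace Ω]

/-- A measurable a.e.-bounded function on a finite measure space is integrable. -/
lemma integrable_of_ae_bound {μ : Measure Ω} [IsFiniteMeasure μ] {f : Ω → ℝ}
    (hf : AEStronglyMeasurable f μ) {C : ℝ} (h : ∀ᵐ ω ∂μ, |f ω| ≤ C) :
    Integrable f μ :=
  (integrable_const C).mono' hf (by simpa [Real.norm_eq_abs] using h)

/-- Pulling the conditional expectation `μ[W|m']` out:
`∫_s μ[W|m'] ⬝ μ[g|m'] = ∫_s μ[W|m'] ⬝ g` for `s ∈ m'`. -/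
lemma pull_aux (hm' : m' ≤ mΩ) (μ : Measure Ω) [IsProbabilityMeasure μ]
    {g : Ω → ℝ} (hg : Integrable g μ) {W : Ω → ℝ}
    (hEWbd : ∀ᵐ ω ∂μ, ‖(μ[W|m']) ω‖ ≤ 1)
    {s : Set Ω} (hs : MeasurableSet[m'] s) :
    ∫ ω in s, (μ[W|m']) ω * (μ[g|m']) ω ∂μ = ∫ ω in s, (μ[W|m']) ω * g ω ∂μ := by
  have hEWm : AEStronglyMeasurable (μ[W|m']) μ :=
    (stronglyMeasurable_condExp.mono hm').aestronglyMeasurable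
  have hmul := condExp_stronglyMeasurable_mul_of_bound hm'
    (stronglyMeasurable_condExp (f := W)) hg 1 hEWbd
  have hint : Integrable ((μ[W|m']) * g) μ := hg.bdd_mul hEWm hEWbd
  calc ∫ ω in s, (μ[W|m']) ω * (μ[g|m']) ω ∂μ
      = ∫ ω in s, (μ[(μ[W|m']) * g|m']) ω ∂μ := by
        refine (setIntegral_congr_ae (hm' s hs) ?_)
        filter_upwards [hmul] with ω h _
        exact h.symm
    _ = ∫ ω in s, ((μ[W|m']) * g) ω ∂μ := setIntegral_condExp hm' hint hs
    _ = ∫ ω in s, (μ[W|m']) ω * g ω ∂μ := rfl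

/-- Key lemma: conditional expectation of a product of a `{0,1}`-valued random
variable with a bounded random variable, conditionally independent of it. -/
lemma condexp_mul_binary [StandardBorelSpace Ω] (hm' : m' ≤ mΩ)
    (μ : Measure Ω) [IsProbabilityMeasure μ]
    {W Z : Ω → ℝ} (hW : Measurable W) (hZ : Measurable Z)
    (hWbin : ∀ ω, W ω = 0 ∨ W ω = 1) {C : ℝ} (hC : ∀ ω, |Z ω| ≤ C)
    (hind : CondIndepFun m' hm' W Z μ) :
    μ[fun ω => W ω * Z ω|m'] =ᵐ[μ] fun ω => (μ[W|m']) ω * (μ[Z|m']) ω := by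
  haveI : SigmaFinite (μ.trim hm') := by
    have : IsFiniteMeasure (μ.trim hm') := isFiniteMeasure_trim hm'
    infer_instance
  set B := max C 0 with hBdef
  have hCB : ∀ ω, |Z ω| ≤ B := fun ω => (hC ω).trans (le_max_left _ _)
  have hB0 : (0:ℝ) ≤ B := le_max_right _ _
  have hW1 : ∀ ω, |W ω| ≤ 1 := by
    intro ω; rcases hWbin ω with h | h <;> simp [h]
  have hWint : Integrable W μ :=
    integrable_of_ae_bound hW.aestronglyMeasurable (Eventually.of_forall hW1)
  have hZint : Integrable Z μ :=
    integrable_of_ae_bound hZ.aestronglyMeasurable (Eventually.of_forall hCB)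
  have hWZbd : ∀ ω, |W ω * Z ω| ≤ B := by
    intro ω
    rw [abs_mul]
    calc |W ω| * |Z ω| ≤ 1 * B :=
          mul_le_mul (hW1 ω) (hCB ω) (abs_nonneg _) zero_le_one
      _ = B := one_mul B
  have hWZint : Integrable (fun ω => W ω * Z ω) μ :=
    integrable_of_ae_bound (hW.mul hZ).aestronglyMeasurable (Eventually.of_forall hWZbd)
  have hEWbd : ∀ᵐ ω ∂μ, ‖(μ[W|m']) ω‖ ≤ 1 := by
    have h := ae_bdd_condExp_of_ae_bdd (m := m') (μ := μ) (R := 1) (f := W)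
      (Eventually.of_forall (fun ω => by simpa using hW1 ω))
    filter_upwards [h] with ω hω
    simpa [Real.norm_eq_abs] using hω
  have hEWm : AEStronglyMeasurable (μ[W|m']) μ :=
    (stronglyMeasurable_condExp.mono hm').aestronglyMeasurable
  have hset : ∀ t : Set ℝ, MeasurableSet t →
      (μ⟦W ⁻¹' {1} ∩ Z ⁻¹' t|m'⟧) =ᵐ[μ]
        fun ω => (μ⟦W ⁻¹' {1}|m'⟧) ω * (μ⟦Z ⁻¹' t|m'⟧) ω :=
    fun t ht => (condIndepFun_iff_condExp_inter_preimage_eq_mul hW hZ).mp hind {1} t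
      (measurableSet_singleton 1) ht
  have hWind : W = (W ⁻¹' {1}).indicator (fun _ => (1:ℝ)) := by
    funext ω
    rcases hWbin ω with h | h <;>
      simp [Set.indicator_apply, Set.mem_preimage, h]
  have hWc : μ[(W ⁻¹' {1}).indicator (fun _ => (1:ℝ))|m'] = μ[W|m'] := by
    conv_rhs => rw [hWind]
  -- main set-integral identity
  have main : ∀ s, MeasurableSet[m'] s →
      ∫ ω in s, (μ[W|m']) ω * (μ[Z|m']) ω ∂μ = ∫ ω in s, W ω * Z ω ∂μ := by
    intro s hs
    have smeas : MeasurableSet s := hm' s hs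
    have step1 : ∫ ω in s, (μ[W|m']) ω * (μ[Z|m']) ω ∂μ
        = ∫ ω in s, (μ[W|m']) ω * Z ω ∂μ := pull_aux hm' μ hZint hEWbd hs
    -- indicator case
    have hclaim : ∀ t : Set ℝ, MeasurableSet t →
        ∫ ω in s, W ω * Set.indicator t (fun _ => (1:ℝ)) (Z ω) ∂μ
          = ∫ ω in s, (μ[W|m']) ω * Set.indicator t (fun _ => (1:ℝ)) (Z ω) ∂μ := by
      intro t ht
      have hZt : MeasurableSet (Z ⁻¹' t) := hZ ht
      have hAt : MeasurableSet (W ⁻¹' {1} ∩ Z ⁻¹' t) :=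
        (hW (measurableSet_singleton 1)).inter hZt
      have hind_eq : ∀ ω, W ω * Set.indicator t (fun _ => (1:ℝ)) (Z ω)
          = Set.indicator (W ⁻¹' {1} ∩ Z ⁻¹' t) (fun _ => (1:ℝ)) ω := by
        intro ω
        by_cases h1 : Z ω ∈ t
        · rcases hWbin ω with h | h <;>
            simp [Set.indicator_apply, Set.mem_preimage, Set.mem_inter_iff, h1, h]
        · simp [Set.indicator_apply, Set.mem_preimage, Set.mem_inter_iff, h1]
      have hind_eq2 : ∀ ω, Set.indicator t (fun _ => (1:ℝ)) (Z ω)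
          = Set.indicator (Z ⁻¹' t) (fun _ => (1:ℝ)) ω := by
        intro ω; by_cases h1 : Z ω ∈ t <;> simp [Set.indicator_apply, h1]
      have hint1 : Integrable ((W ⁻¹' {1} ∩ Z ⁻¹' t).indicator (fun _ => (1:ℝ))) μ :=
        (integrable_const (1:ℝ)).indicator hAt
      have hintZt : Integrable ((Z ⁻¹' t).indicator (fun _ => (1:ℝ))) μ :=
        (integrable_const (1:ℝ)).indicator hZt
      calc ∫ ω in s, W ω * Set.indicator t (fun _ => (1:ℝ)) (Z ω) ∂μ
          = ∫ ω in s, Set.indicator (W ⁻¹' {1} ∩ Z ⁻¹' t) (fun _ => (1:ℝ)) ω ∂μ := by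
            refine setIntegral_congr_ae smeas ?_
            filter_upwards with ω _
            exact hind_eq ω
        _ = ∫ ω in s, (μ⟦W ⁻¹' {1} ∩ Z ⁻¹' t|m'⟧) ω ∂μ :=
            (setIntegral_condExp hm' hint1 hs).symm
        _ = ∫ ω in s, (μ[W|m']) ω * (μ⟦Z ⁻¹' t|m'⟧) ω ∂μ := by
            refine setIntegral_congr_ae smeas ?_
            filter_upwards [hset t ht] with ω h _
            rw [h, hWc]
        _ = ∫ ω in s, (μ[W|m']) ω * Set.indicator (Z ⁻¹' t) (fun _ => (1:ℝ)) ω ∂μ :=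
            pull_aux hm' μ hintZt hEWbd hs
        _ = ∫ ω in s, (μ[W|m']) ω * Set.indicator t (fun _ => (1:ℝ)) (Z ω) ∂μ := by
            refine setIntegral_congr_ae smeas ?_
            filter_upwards with ω _
            rw [hind_eq2 ω]
    -- simple function case
    have hsimple : ∀ φ : SimpleFunc ℝ ℝ,
        ∫ ω in s, W ω * φ (Z ω) ∂μ = ∫ ω in s, (μ[W|m']) ω * φ (Z ω) ∂μ := by
      intro φ
      induction φ using SimpleFunc.induction with
      | @const c t ht =>
        have hco : ∀ x : ℝ,
            (SimpleFunc.piecewise t ht (SimpleFunc.const ℝ c) (SimpleFunc.const ℝ 0)) x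
              = c * Set.indicator t (fun _ => (1:ℝ)) x := by
          intro x; by_cases h : x ∈ t <;>
            simp [SimpleFunc.piecewise_apply, Set.indicator_apply, h]
        simp_rw [hco, mul_left_comm _ c, integral_const_mul]
        rw [hclaim t ht]
      | @add f g hdisj ihf ihg =>
        obtain ⟨Cf, hCf⟩ := f.exists_forall_norm_le
        obtain ⟨Cg, hCg⟩ := g.exists_forall_norm_le
        have hif : Integrable (fun ω => W ω * f (Z ω)) (μ.restrict s) := by
          refine integrable_of_ae_bound
            ((hW.mul (f.measurable.comp hZ)).aestronglyMeasurable) (C := Cf)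
            (Eventually.of_forall fun ω => ?_)
          calc |W ω * f (Z ω)| = |W ω| * |f (Z ω)| := abs_mul _ _
            _ ≤ 1 * Cf := mul_le_mul (hW1 ω) (by simpa [Real.norm_eq_abs] using hCf (Z ω))
                (abs_nonneg _) zero_le_one
            _ = Cf := one_mul Cf
        have hig : Integrable (fun ω => W ω * g (Z ω)) (μ.restrict s) := by
          refine integrable_of_ae_bound
            ((hW.mul (g.measurable.comp hZ)).aestronglyMeasurable) (C := Cg)
            (Eventually.of_forall fun ω => ?_)
          calc |W ω * g (Z ω)| = |W ω| * |g (Z ω)| := abs_mul _ _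
            _ ≤ 1 * Cg := mul_le_mul (hW1 ω) (by simpa [Real.norm_eq_abs] using hCg (Z ω))
                (abs_nonneg _) zero_le_one
            _ = Cg := one_mul Cg
        have hif' : Integrable (fun ω => (μ[W|m']) ω * f (Z ω)) (μ.restrict s) := by
          refine integrable_of_ae_bound
            (hEWm.restrict.mul ((f.measurable.comp hZ).aestronglyMeasurable)) (C := Cf)
            ?_
          filter_upwards [ae_restrict_of_ae hEWbd] with ω hω
          calc |(μ[W|m']) ω * f (Z ω)| = |(μ[W|m']) ω| * |f (Z ω)| := abs_mul _ _
            _ ≤ 1 * Cf := mul_le_mul (by simpa [Real.norm_eq_abs] using hω)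
                (by simpa [Real.norm_eq_abs] using hCf (Z ω)) (abs_nonneg _) zero_le_one
            _ = Cf := one_mul Cf
        have hig' : Integrable (fun ω => (μ[W|m']) ω * g (Z ω)) (μ.restrict s) := by
          refine integrable_of_ae_bound
            (hEWm.restrict.mul ((g.measurable.comp hZ).aestronglyMeasurable)) (C := Cg)
            ?_
          filter_upwards [ae_restrict_of_ae hEWbd] with ω hω
          calc |(μ[W|m']) ω * g (Z ω)| = |(μ[W|m']) ω| * |g (Z ω)| := abs_mul _ _
            _ ≤ 1 * Cg := mul_le_mul (by simpa [Real.norm_eq_abs] using hω)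
                (by simpa [Real.norm_eq_abs] using hCg (Z ω)) (abs_nonneg _) zero_le_one
            _ = Cg := one_mul Cg
        simp only [SimpleFunc.coe_add, Pi.add_apply, mul_add]
        rw [integral_add hif hig, integral_add hif' hig', ihf, ihg]
    -- limit
    set φ : ℕ → SimpleFunc ℝ ℝ :=
      fun n => SimpleFunc.approxOn (id : ℝ → ℝ) measurable_id univ 0 (mem_univ 0) n with hφ
    have hφ_bd : ∀ n x, ‖φ n x‖ ≤ 2 * |x| := by
      intro n x
      have := SimpleFunc.norm_approxOn_zero_le (f := (id : ℝ → ℝ)) measurable_id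
        (mem_univ (0:ℝ)) x n
      simpa [Real.norm_eq_abs, two_mul] using this
    have hφ_tend : ∀ x : ℝ, Tendsto (fun n => φ n x) atTop (𝓝 x) := by
      intro x
      simpa using SimpleFunc.tendsto_approxOn (f := (id : ℝ → ℝ)) measurable_id
        (mem_univ (0:ℝ)) (x := x) (by simp)
    have htend1 : Tendsto (fun n => ∫ ω in s, W ω * φ n (Z ω) ∂μ) atTop
        (𝓝 (∫ ω in s, W ω * Z ω ∂μ)) := by
      refine tendsto_integral_of_dominated_convergence (fun _ => 2 * B)
        (fun n => ((hW.mul ((φ n).measurable.comp hZ)).aestronglyMeasurable))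
        (integrable_const _) (fun n => Eventually.of_forall fun ω => ?_)
        (Eventually.of_forall fun ω => (hφ_tend (Z ω)).const_mul _)
      calc ‖W ω * φ n (Z ω)‖ = |W ω| * ‖φ n (Z ω)‖ := by
            rw [norm_mul]; rw [Real.norm_eq_abs]
        _ ≤ 1 * (2 * |Z ω|) := mul_le_mul (hW1 ω) (hφ_bd n (Z ω)) (norm_nonneg _) zero_le_one
        _ = 2 * |Z ω| := one_mul _
        _ ≤ 2 * B := by nlinarith [hCB ω, abs_nonneg (Z ω)]
    have htend2 : Tendsto (fun n => ∫ ω in s, (μ[W|m']) ω * φ n (Z ω) ∂μ) atTop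
        (𝓝 (∫ ω in s, (μ[W|m']) ω * Z ω ∂μ)) := by
      refine tendsto_integral_of_dominated_convergence (fun _ => 2 * B)
        (fun n => (hEWm.restrict.mul (((φ n).measurable.comp hZ).aestronglyMeasurable)))
        (integrable_const _) (fun n => ?_)
        (Eventually.of_forall fun ω => (hφ_tend (Z ω)).const_mul _)
      filter_upwards [ae_restrict_of_ae hEWbd] with ω hω
      calc ‖(μ[W|m']) ω * φ n (Z ω)‖ = ‖(μ[W|m']) ω‖ * ‖φ n (Z ω)‖ := norm_mul _ _
        _ ≤ 1 * (2 * |Z ω|) := mul_le_mul hω (hφ_bd n (Z ω)) (norm_nonneg _) zero_le_one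
        _ = 2 * |Z ω| := one_mul _
        _ ≤ 2 * B := by nlinarith [hCB ω, abs_nonneg (Z ω)]
    have heq : ∀ n, ∫ ω in s, W ω * φ n (Z ω) ∂μ
        = ∫ ω in s, (μ[W|m']) ω * φ n (Z ω) ∂μ := fun n => hsimple (φ n)
    have : ∫ ω in s, W ω * Z ω ∂μ = ∫ ω in s, (μ[W|m']) ω * Z ω ∂μ := by
      refine tendsto_nhds_unique ?_ htend2
      simpa only [heq] using htend1
    rw [step1, this]
  refine (ae_eq_condExp_of_forall_setIntegral_eq hm' hWZint ?_ (fun s hs _ => main s hs) ?_).symm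
  · intro t ht _
    exact ((integrable_condExp (f := Z)).bdd_mul hEWm hEWbd).integrableOn
  · exact (stronglyMeasurable_condExp.mul stronglyMeasurable_condExp).aestronglyMeasurable

end Aux

theorem stmt_0
    {Ω 𝒳 : Type*} [MeasurableSpace Ω] [StandardBorelSpace Ω] [MeasurableSpace 𝒳]
    (P : Measure Ω) [IsProbabilityMeasure P]
    (X : Ω → 𝒳) (hX : Measurable X)
    (W : Ω → ℝ) (hWm : Measurable W) (hWbin : ∀ ω, W ω = 0 ∨ W ω = 1)
    (Y0 Y1 : Ω → ℝ) (hY0m : Measurable Y0) (hY1m : Measurable Y1)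
    (CY : ℝ) (hYbdd : ∀ ω, |Y0 ω| ≤ CY ∧ |Y1 ω| ≤ CY)
    (Y : Ω → ℝ) (hSUTVA : ∀ ω, Y ω = W ω * Y1 ω + (1 - W ω) * Y0 ω)
    (hUnconf : CondIndepFun (sigmaAlg X) hX.comap_le W (fun ω => (Y0 ω, Y1 ω)) P)
    (e : 𝒳 → ℝ) (hem : Measurable e)
    (hprop : P[W|sigmaAlg X] =ᵐ[P] (fun ω => e (X ω)))
    (hoverlap : ∀ᵐ ω ∂P, 0 < e (X ω) ∧ e (X ω) < 1)
    (μ0 μ1 : 𝒳 → ℝ) (hμ0m : Measurable μ0) (hμ1m : Measurable μ1)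
    (Cμ : ℝ) (hμbdd : ∀ x, |μ0 x| ≤ Cμ ∧ |μ1 x| ≤ Cμ)
    (hμ0c : P[Y0|sigmaAlg X] =ᵐ[P] (fun ω => μ0 (X ω)))
    (hμ1c : P[Y1|sigmaAlg X] =ᵐ[P] (fun ω => μ1 (X ω))) :
    P[(fun ω => e (X ω) * (1 - e (X ω)) * (μ1 (X ω) - μ0 (X ω)) - (W ω - e (X ω)) * Y ω)|sigmaAlg X]
      =ᵐ[P] 0 := by
  have hm' : sigmaAlg X ≤ _ := hX.comap_le
  haveI : SigmaFinite (P.trim hm') := by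
    have : IsFiniteMeasure (P.trim hm') := isFiniteMeasure_trim hm'
    infer_instance
  have hXm' : Measurable[sigmaAlg X] X := fun t ht => ⟨t, ht, rfl⟩
  have he' : Measurable[sigmaAlg X] fun ω => e (X ω) := hem.comp hXm'
  have hμ0' : Measurable[sigmaAlg X] fun ω => μ0 (X ω) := hμ0m.comp hXm'
  have hμ1' : Measurable[sigmaAlg X] fun ω => μ1 (X ω) := hμ1m.comp hXm'
  -- e ∘ X is a.e. bounded by 1
  have heb : ∀ᵐ ω ∂P, |e (X ω)| ≤ 1 := by
    filter_upwards [hoverlap] with ω h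
    rw [abs_le]; constructor <;> linarith [h.1, h.2]
  have heb' : ∀ᵐ ω ∂P, |1 - e (X ω)| ≤ 1 := by
    filter_upwards [hoverlap] with ω h
    rw [abs_le]; constructor <;> linarith [h.1, h.2]
  -- conditional independence of W with Y1 and of (1-W) with Y0
  have hWY1 : CondIndepFun (sigmaAlg X) hm' W Y1 P := by
    have := hUnconf.comp measurable_id measurable_snd
    exact this
  have hWY0 : CondIndepFun (sigmaAlg X) hm' (fun ω => 1 - W ω) Y0 P := by
    have := hUnconf.comp (measurable_const.sub measurable_id : Measurable fun x : ℝ => 1 - x)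
      measurable_fst
    exact this
  have hW'bin : ∀ ω, (1 - W ω) = 0 ∨ (1 - W ω) = 1 := by
    intro ω; rcases hWbin ω with h | h <;> simp [h]
  -- products
  have h1 : P[fun ω => W ω * Y1 ω|sigmaAlg X] =ᵐ[P]
      fun ω => (P[W|sigmaAlg X]) ω * (P[Y1|sigmaAlg X]) ω :=
    condexp_mul_binary hm' P hWm hY1m hWbin (C := CY) (fun ω => (hYbdd ω).2) hWY1
  have h2 : P[fun ω => (1 - W ω) * Y0 ω|sigmaAlg X] =ᵐ[P]
      fun ω => (P[fun ω => 1 - W ω|sigmaAlg X]) ω * (P[Y0|sigmaAlg X]) ω :=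
    condexp_mul_binary hm' P (measurable_const.sub hWm) hY0m hW'bin (C := CY)
      (fun ω => (hYbdd ω).1) hWY0
  have hWint : Integrable W P := by
    refine integrable_of_ae_bound hWm.aestronglyMeasurable (C := 1)
      (Eventually.of_forall fun ω => ?_)
    rcases hWbin ω with h | h <;> simp [h]
  -- E[1-W | m'] = 1 - e∘X a.e.
  have hcW' : P[fun ω => 1 - W ω|sigmaAlg X] =ᵐ[P] fun ω => 1 - e (X ω) := by
    have hsub := condExp_sub (μ := P) (m := sigmaAlg X) (f := fun _ : Ω => (1:ℝ)) (g := W)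
      (integrable_const 1) hWint
    have hconst : P[fun _ : Ω => (1:ℝ)|sigmaAlg X] = fun _ => (1:ℝ) := condExp_const hm' 1
    have : ((fun _ : Ω => (1:ℝ)) - W) = fun ω => 1 - W ω := rfl
    rw [this] at hsub
    filter_upwards [hsub, hprop] with ω hω hpω
    rw [hω]
    simp only [Pi.sub_apply, hconst, hpω]
  -- replace with e, μ1, μ0
  have h1' : P[fun ω => W ω * Y1 ω|sigmaAlg X] =ᵐ[P] fun ω => e (X ω) * μ1 (X ω) := by
    filter_upwards [h1, hprop, hμ1c] with ω ha hb hc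
    rw [ha, hb, hc]
  have h2' : P[fun ω => (1 - W ω) * Y0 ω|sigmaAlg X] =ᵐ[P]
      fun ω => (1 - e (X ω)) * μ0 (X ω) := by
    filter_upwards [h2, hcW', hμ0c] with ω ha hb hc
    rw [ha, hb, hc]
  -- integrability
  have hH1int : Integrable (fun ω => W ω * Y1 ω) P := by
    refine integrable_of_ae_bound (hWm.mul hY1m).aestronglyMeasurable
      (C := max CY 0) (Eventually.of_forall fun ω => ?_)
    rw [abs_mul]
    calc |W ω| * |Y1 ω| ≤ 1 * max CY 0 := by
          refine mul_le_mul ?_ ((hYbdd ω).2.trans (le_max_left _ _)) (abs_nonneg _) zero_le_one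
          rcases hWbin ω with h | h <;> simp [h]
      _ = max CY 0 := one_mul _
  have hH2int : Integrable (fun ω => (1 - W ω) * Y0 ω) P := by
    refine integrable_of_ae_bound ((measurable_const.sub hWm).mul hY0m).aestronglyMeasurable
      (C := max CY 0) (Eventually.of_forall fun ω => ?_)
    rw [abs_mul]
    calc |1 - W ω| * |Y0 ω| ≤ 1 * max CY 0 := by
          refine mul_le_mul ?_ ((hYbdd ω).1.trans (le_max_left _ _)) (abs_nonneg _) zero_le_one
          rcases hWbin ω with h | h <;> simp [h]
      _ = max CY 0 := one_mul _
  -- the m'-measurable factors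
  set G : Ω → ℝ := fun ω => e (X ω) * (1 - e (X ω)) * (μ1 (X ω) - μ0 (X ω)) with hGdef
  have hGint : Integrable G P := by
    refine integrable_of_ae_bound
      (((hem.comp hX).mul (measurable_const.sub (hem.comp hX))).mul
        ((hμ1m.comp hX).sub (hμ0m.comp hX))).aestronglyMeasurable
      (C := 2 * max Cμ 0) ?_
    filter_upwards [heb, heb'] with ω h1e h2e
    rw [abs_mul, abs_mul]
    have hμb : |μ1 (X ω) - μ0 (X ω)| ≤ 2 * max Cμ 0 := by
      have := (hμbdd (X ω)).1
      have := (hμbdd (X ω)).2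
      have h1' : |μ1 (X ω)| ≤ max Cμ 0 := (hμbdd (X ω)).2.trans (le_max_left _ _)
      have h0' : |μ0 (X ω)| ≤ max Cμ 0 := (hμbdd (X ω)).1.trans (le_max_left _ _)
      calc |μ1 (X ω) - μ0 (X ω)| ≤ |μ1 (X ω)| + |μ0 (X ω)| := abs_sub _ _
        _ ≤ max Cμ 0 + max Cμ 0 := add_le_add h1' h0'
        _ = 2 * max Cμ 0 := by ring
    calc |e (X ω)| * |1 - e (X ω)| * |μ1 (X ω) - μ0 (X ω)|
        ≤ 1 * 1 * (2 * max Cμ 0) := by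
          refine mul_le_mul (mul_le_mul h1e h2e (abs_nonneg _) zero_le_one) hμb
            (abs_nonneg _) (by norm_num)
      _ = 2 * max Cμ 0 := by ring
  have hGm' : StronglyMeasurable[sigmaAlg X] G :=
    ((he'.mul (measurable_const.sub he')).mul (hμ1'.sub hμ0')).stronglyMeasurable
  have hGcond : P[G|sigmaAlg X] = G := condExp_of_stronglyMeasurable hm' hGm' hGint
  -- decompose the target function
  set D1 : Ω → ℝ := fun ω => (1 - e (X ω)) * (W ω * Y1 ω) with hD1def
  set D2 : Ω → ℝ := fun ω => e (X ω) * ((1 - W ω) * Y0 ω) with hD2def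
  have hFdecomp : (fun ω => e (X ω) * (1 - e (X ω)) * (μ1 (X ω) - μ0 (X ω))
      - (W ω - e (X ω)) * Y ω) = fun ω => G ω - (D1 ω - D2 ω) := by
    funext ω
    rw [hSUTVA ω]
    simp only [hGdef, hD1def, hD2def]
    rcases hWbin ω with h | h <;> rw [h] <;> ring
  have hD1int : Integrable D1 P := by
    refine integrable_of_ae_bound
      ((measurable_const.sub (hem.comp hX)).mul (hWm.mul hY1m)).aestronglyMeasurable
      (C := max CY 0) ?_
    filter_upwards [heb'] with ω h2e
    simp only [hD1def]
    rw [abs_mul]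
    calc |1 - e (X ω)| * |W ω * Y1 ω| ≤ 1 * max CY 0 := by
          refine mul_le_mul h2e ?_ (abs_nonneg _) zero_le_one
          rw [abs_mul]
          calc |W ω| * |Y1 ω| ≤ 1 * max CY 0 := by
                refine mul_le_mul ?_ ((hYbdd ω).2.trans (le_max_left _ _)) (abs_nonneg _)
                  zero_le_one
                rcases hWbin ω with h | h <;> simp [h]
            _ = max CY 0 := one_mul _
      _ = max CY 0 := one_mul _
  have hD2int : Integrable D2 P := by
    refine integrable_of_ae_bound
      ((hem.comp hX).mul ((measurable_const.sub hWm).mul hY0m)).aestronglyMeasurable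
      (C := max CY 0) ?_
    filter_upwards [heb] with ω h1e
    simp only [hD2def]
    rw [abs_mul]
    calc |e (X ω)| * |(1 - W ω) * Y0 ω| ≤ 1 * max CY 0 := by
          refine mul_le_mul h1e ?_ (abs_nonneg _) zero_le_one
          rw [abs_mul]
          calc |1 - W ω| * |Y0 ω| ≤ 1 * max CY 0 := by
                refine mul_le_mul ?_ ((hYbdd ω).1.trans (le_max_left _ _)) (abs_nonneg _)
                  zero_le_one
                rcases hWbin ω with h | h <;> simp [h]
            _ = max CY 0 := one_mul _
      _ = max CY 0 := one_mul _
  -- pull out m'-measurable factors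
  have hD1cond : P[D1|sigmaAlg X] =ᵐ[P] fun ω => (1 - e (X ω)) * (e (X ω) * μ1 (X ω)) := by
    have hpull := condExp_stronglyMeasurable_mul_of_bound hm' (f := fun ω => 1 - e (X ω))
      ((measurable_const.sub he').stronglyMeasurable :
        StronglyMeasurable[sigmaAlg X] fun ω => 1 - e (X ω))
      hH1int 1 (by filter_upwards [heb'] with ω h; simpa [Real.norm_eq_abs] using h)
    have : ((fun ω => 1 - e (X ω)) * fun ω => W ω * Y1 ω) = D1 := rfl
    rw [this] at hpull
    filter_upwards [hpull, h1'] with ω ha hb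
    rw [ha]
    simp only [Pi.mul_apply, hb]
  have hD2cond : P[D2|sigmaAlg X] =ᵐ[P] fun ω => e (X ω) * ((1 - e (X ω)) * μ0 (X ω)) := by
    have hpull := condExp_stronglyMeasurable_mul_of_bound hm'
      (he'.stronglyMeasurable : StronglyMeasurable[sigmaAlg X] fun ω => e (X ω))
      hH2int 1 (by filter_upwards [heb] with ω h; simpa [Real.norm_eq_abs] using h)
    have : ((fun ω => e (X ω)) * fun ω => (1 - W ω) * Y0 ω) = D2 := rfl
    rw [this] at hpull
    filter_upwards [hpull, h2'] with ω ha hb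
    rw [ha]
    simp only [Pi.mul_apply, hb]
  -- assemble
  have hDint : Integrable (D1 - D2) P := hD1int.sub hD2int
  have hsub1 : P[G - (D1 - D2)|sigmaAlg X] =ᵐ[P] P[G|sigmaAlg X] - P[D1 - D2|sigmaAlg X] :=
    condExp_sub hGint hDint _
  have hsub2 : P[D1 - D2|sigmaAlg X] =ᵐ[P] P[D1|sigmaAlg X] - P[D2|sigmaAlg X] := condExp_sub hD1int hD2int _
  have hGD : (fun ω => G ω - (D1 ω - D2 ω)) = G - (D1 - D2) := rfl
  rw [hFdecomp, hGD]
  filter_upwards [hsub1, hsub2, hD1cond, hD2cond] with ω hω1 hω2 hω3 hω4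
  rw [hω1]
  simp only [Pi.sub_apply, hω2, hGcond, Pi.zero_apply]
  rw [hω3, hω4]
  simp only [hGdef]
  ring
end

section
/- Under unconfoundedness, SUTVA, population overlap and the linear-CATE assumption τ(X) = βᵀZ(X), for every real ν ≥ 0 the vector moment condition E[(e(X)(1−e(X)))^ν · Z(X) · ((W−e(X))·Y − e(X)(1−e(X))·Z(X)ᵀβ)] = 0 holds in ℝ^d, and the random vector inside the expectation is almost surely bounded. -/
open MeasureTheory ProbabilityTheory Filter Set

lemma abs_mul_le' {a b A B : ℝ} (ha : |a| ≤ A) (hb : |b| ≤ B) : |a * b| ≤ A * B := by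
  rw [abs_mul]; exact mul_le_mul ha hb (abs_nonneg _) ((abs_nonneg a).trans ha)

lemma integrable_of_bdd {Ω : Type*} [MeasurableSpace Ω] (P : Measure Ω) [IsFiniteMeasure P]
    {f : Ω → ℝ} (hf : AEStronglyMeasurable f P) {C : ℝ} (hb : ∀ᵐ ω ∂P, |f ω| ≤ C) :
    Integrable f P :=
  ⟨hf, HasFiniteIntegral.of_bounded (C := C) (by simpa [Real.norm_eq_abs] using hb)⟩

lemma key2 {Ω : Type*} [mΩ : MeasurableSpace Ω] (P : Measure Ω) [IsProbabilityMeasure P]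
    {m : MeasurableSpace Ω} (hm : m ≤ mΩ) {φ ψ : Ω → ℝ} (hφ : StronglyMeasurable[m] φ)
    (hint : Integrable (fun ω => φ ω * ψ ω) P) (hψ : Integrable ψ P) :
    ∫ ω, φ ω * ψ ω ∂P = ∫ ω, φ ω * (P[ψ|m]) ω ∂P := by
  have h := condExp_mul_of_stronglyMeasurable_left (μ := P) hφ hint hψ
  rw [← integral_condExp hm (μ := P) (f := fun ω => φ ω * ψ ω)]
  exact integral_congr_ae h

lemma key0 {Ω : Type*} {m : MeasurableSpace Ω} {γ : Type*}
    [mγ : MeasurableSpace γ] [mΩ : MeasurableSpace Ω] [StandardBorelSpace Ω]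
    (P : Measure Ω) [IsProbabilityMeasure P] (hm : m ≤ mΩ)
    {W : Ω → ℝ} (hWm : Measurable[mΩ] W) (hWbin : ∀ ω, W ω = 0 ∨ W ω = 1)
    {V : Ω → γ} (hVm : Measurable[mΩ] V)
    (hindep : CondIndepFun m hm W V P)
    {φ : Ω → ℝ} (hφm : Measurable[m] φ) {Cφ : ℝ} (hφb : ∀ᵐ ω ∂P, |φ ω| ≤ Cφ)
    {eh : Ω → ℝ} (hehm : Measurable[m] eh) {Ce : ℝ} (heb : ∀ᵐ ω ∂P, |eh ω| ≤ Ce)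
    (heq : P[W|m] =ᵐ[P] eh)
    {ψ : γ → ℝ} (hψm : Measurable ψ) {Cψ : ℝ} (hψb : ∀ ω, |ψ (V ω)| ≤ Cψ) :
    ∫ ω, φ ω * (W ω - eh ω) * ψ (V ω) ∂P = 0 := by
  have hφ0 : Measurable[mΩ] φ := hφm.mono hm le_rfl
  have heh0 : Measurable[mΩ] eh := hehm.mono hm le_rfl
  have hW1 : ∀ ω, |W ω| ≤ 1 := by intro ω; rcases hWbin ω with h | h <;> simp [h]
  have hmV : MeasurableSpace.comap V mγ ≤ mΩ := hVm.comap_le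
  set D : Ω → ℝ := fun ω => φ ω * (W ω - eh ω) with hD
  have hDm : Measurable[mΩ] D := hφ0.mul (hWm.sub heh0)
  have hWe : ∀ᵐ ω ∂P, |W ω - eh ω| ≤ 1 + Ce := by
    filter_upwards [heb] with ω h2
    calc |W ω - eh ω| ≤ |W ω| + |eh ω| := abs_sub _ _
      _ ≤ 1 + Ce := add_le_add (hW1 ω) h2
  have hDb : ∀ᵐ ω ∂P, |D ω| ≤ Cφ * (1 + Ce) := by
    filter_upwards [hφb, hWe] with ω h1 h3
    exact abs_mul_le' h1 h3
  have hDint : Integrable D P := integrable_of_bdd P hDm.aestronglyMeasurable hDb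
  -- set integrals of D over comap V sets vanish
  have hset : ∀ s, MeasurableSet[MeasurableSpace.comap V mγ] s → ∫ ω in s, D ω ∂P = 0 := by
    rintro s ⟨t, ht, rfl⟩
    set I : Ω → ℝ := (V ⁻¹' t).indicator (fun _ => (1 : ℝ)) with hIdef
    have hIm : Measurable[mΩ] I := measurable_const.indicator (hVm ht)
    have hIb : ∀ ω, |I ω| ≤ 1 := by
      intro ω; by_cases h : ω ∈ V ⁻¹' t <;> simp [hIdef, Set.indicator_apply, h]
    have h1 : ∫ ω in V ⁻¹' t, D ω ∂P = ∫ ω, D ω * I ω ∂P := by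
      rw [← integral_indicator (hVm ht)]
      refine integral_congr_ae (Eventually.of_forall fun ω => ?_)
      by_cases h : ω ∈ V ⁻¹' t <;> simp [hIdef, Set.indicator_apply, h]
    rw [h1]
    have hWIint : Integrable (fun ω => W ω * I ω) P :=
      integrable_of_bdd P (hWm.mul hIm).aestronglyMeasurable
        (Eventually.of_forall fun ω => by simpa using abs_mul_le' (hW1 ω) (hIb ω))
    have hehIint : Integrable (fun ω => eh ω * I ω) P :=
      integrable_of_bdd P (heh0.mul hIm).aestronglyMeasurable
        (by filter_upwards [heb] with ω h2; simpa using abs_mul_le' h2 (hIb ω))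
    have hIint : Integrable I P :=
      integrable_of_bdd P hIm.aestronglyMeasurable (Eventually.of_forall hIb)
    have hprod := ((condIndepFun_iff_condExp_inter_preimage_eq_mul hWm hVm).mp hindep)
      {1} t (measurableSet_singleton 1) ht
    have hWfun : (fun ω => W ω * I ω) = (W ⁻¹' {1} ∩ V ⁻¹' t).indicator (fun _ => (1 : ℝ)) := by
      funext ω
      rcases hWbin ω with h | h <;> by_cases h' : ω ∈ V ⁻¹' t <;>
        simp [hIdef, Set.indicator_apply, h, h', Set.mem_preimage]
    have hWind : W = (W ⁻¹' {1}).indicator (fun _ => (1 : ℝ)) := by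
      funext ω; rcases hWbin ω with h | h <;> simp [Set.indicator_apply, h, Set.mem_preimage]
    have hcond0 : P[fun ω => (W ω - eh ω) * I ω|m] =ᵐ[P] 0 := by
      have hsub : (fun ω => (W ω - eh ω) * I ω)
          = (fun ω => W ω * I ω) - fun ω => eh ω * I ω := by
        funext ω; simp [sub_mul]
      rw [hsub]
      refine (condExp_sub hWIint hehIint _).trans ?_
      have e1 : P[fun ω => W ω * I ω|m] =ᵐ[P] fun ω => eh ω * (P[I|m]) ω := by
        rw [hWfun]
        refine hprod.trans ?_
        have hA : (P⟦W ⁻¹' {1}|m⟧) =ᵐ[P] eh := by rw [← hWind]; exact heq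
        filter_upwards [hA] with ω h; rw [h]
      have e2 : P[fun ω => eh ω * I ω|m] =ᵐ[P] fun ω => eh ω * (P[I|m]) ω :=
        condExp_mul_of_stronglyMeasurable_left hehm.stronglyMeasurable hehIint hIint
      filter_upwards [e1, e2] with ω h1 h2
      simp only [Pi.sub_apply, Pi.zero_apply, h1, h2, sub_self]
    have hDIint : Integrable (fun ω => D ω * I ω) P :=
      integrable_of_bdd P (hDm.mul hIm).aestronglyMeasurable
        (by filter_upwards [hDb] with ω h; simpa using abs_mul_le' h (hIb ω))
    have hWeIint : Integrable (fun ω => (W ω - eh ω) * I ω) P :=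
      integrable_of_bdd P ((hWm.sub heh0).mul hIm).aestronglyMeasurable
        (by filter_upwards [hWe] with ω h; simpa using abs_mul_le' h (hIb ω))
    have hfin : P[fun ω => D ω * I ω|m] =ᵐ[P] 0 := by
      have heqfun : (fun ω => D ω * I ω) = fun ω => φ ω * ((W ω - eh ω) * I ω) := by
        funext ω; simp [hD, mul_assoc]
      have hpull : P[fun ω => φ ω * ((W ω - eh ω) * I ω)|m]
          =ᵐ[P] fun ω => φ ω * (P[fun ω => (W ω - eh ω) * I ω|m]) ω := by
        exact condExp_mul_of_stronglyMeasurable_left (μ := P) hφm.stronglyMeasurable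
          (g := fun ω => (W ω - eh ω) * I ω)
          (by have h' := hDIint; rw [heqfun] at h'; exact h') hWeIint
      rw [heqfun]
      refine hpull.trans ?_
      filter_upwards [hcond0] with ω h
      simp only [Pi.zero_apply] at h ⊢
      rw [h, mul_zero]
    calc ∫ ω, D ω * I ω ∂P
        = ∫ ω, (P[fun ω => D ω * I ω|m]) ω ∂P := (integral_condExp hm).symm
      _ = 0 := by rw [integral_congr_ae hfin]; simp
  have hD0 : (0 : Ω → ℝ) =ᵐ[P] P[D|MeasurableSpace.comap V mγ] := by
    refine ae_eq_condExp_of_forall_setIntegral_eq hmV hDint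
      (fun s _ _ => (integrable_zero _ _ _).integrableOn)
      (fun s hs _ => by simp [hset s hs]) ?_
    exact aestronglyMeasurable_zero
  have hψVm : Measurable[MeasurableSpace.comap V mγ] fun ω => ψ (V ω) :=
    hψm.comp (measurable_iff_comap_le.mpr le_rfl)
  have hint2 : Integrable (fun ω => ψ (V ω) * D ω) P := by
    refine integrable_of_bdd P (((hψVm.mono hmV le_rfl)).mul hDm).aestronglyMeasurable
      (C := Cψ * (Cφ * (1 + Ce))) ?_
    filter_upwards [hDb] with ω h
    exact abs_mul_le' (hψb ω) h
  have hzero : P[fun ω => ψ (V ω) * D ω|MeasurableSpace.comap V mγ] =ᵐ[P] 0 := by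
    refine (condExp_mul_of_stronglyMeasurable_left hψVm.stronglyMeasurable hint2 hDint).trans ?_
    filter_upwards [hD0] with ω h
    simp only [Pi.mul_apply, Pi.zero_apply] at h ⊢
    rw [← h, mul_zero]
  have hfinal : ∫ ω, ψ (V ω) * D ω ∂P = 0 := by
    have h' : ∫ ω, ψ (V ω) * D ω ∂P = ∫ ω, (0 : Ω → ℝ) ω ∂P := by
      rw [← integral_condExp hmV (μ := P) (f := fun ω => ψ (V ω) * D ω)]
      exact integral_congr_ae hzero
    simpa using h'
  rw [show (fun ω => φ ω * (W ω - eh ω) * ψ (V ω)) = fun ω => ψ (V ω) * D ω from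
    funext fun ω => by simp [hD]; ring]
  exact hfinal

theorem stmt_1
    {Ω 𝒳 : Type*} [MeasurableSpace Ω] [StandardBorelSpace Ω] [MeasurableSpace 𝒳]
    (P : Measure Ω) [IsProbabilityMeasure P]
    (X : Ω → 𝒳) (hX : Measurable X)
    (W : Ω → ℝ) (hWm : Measurable W) (hWbin : ∀ ω, W ω = 0 ∨ W ω = 1)
    (Y0 Y1 : Ω → ℝ) (hY0m : Measurable Y0) (hY1m : Measurable Y1)
    (CY : ℝ) (hYbdd : ∀ ω, |Y0 ω| ≤ CY ∧ |Y1 ω| ≤ CY)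
    (Y : Ω → ℝ) (hSUTVA : ∀ ω, Y ω = W ω * Y1 ω + (1 - W ω) * Y0 ω)
    (hUnconf : CondIndepFun (sigmaAlg X) hX.comap_le W (fun ω => (Y0 ω, Y1 ω)) P)
    (e : 𝒳 → ℝ) (hem : Measurable e)
    (hprop : P[W|sigmaAlg X] =ᵐ[P] (fun ω => e (X ω)))
    (hoverlap : ∀ᵐ ω ∂P, 0 < e (X ω) ∧ e (X ω) < 1)
    (μ0 μ1 : 𝒳 → ℝ) (hμ0m : Measurable μ0) (hμ1m : Measurable μ1)
    (Cμ : ℝ) (hμbdd : ∀ x, |μ0 x| ≤ Cμ ∧ |μ1 x| ≤ Cμ)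
    (hμ0c : P[Y0|sigmaAlg X] =ᵐ[P] (fun ω => μ0 (X ω)))
    (hμ1c : P[Y1|sigmaAlg X] =ᵐ[P] (fun ω => μ1 (X ω)))
    {d : ℕ} (Z : 𝒳 → Fin d → ℝ) (hZm : Measurable Z)
    (CZ : ℝ) (hZbdd : ∀ x j, |Z x j| ≤ CZ)
    (β : Fin d → ℝ) (hlinCATE : ∀ x, μ1 x - μ0 x = ∑ j, β j * Z x j) :
    ∀ ν : ℝ, 0 ≤ ν →
      (∀ j : Fin d,
        ∫ ω, (e (X ω) * (1 - e (X ω))) ^ ν * Z (X ω) j * ((W ω - e (X ω)) * Y ω - e (X ω) * (1 - e (X ω)) * ∑ k, β k * Z (X ω) k) ∂P = 0) ∧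
      (∃ C : ℝ, ∀ᵐ ω ∂P, ∀ j : Fin d, |(e (X ω) * (1 - e (X ω))) ^ ν * Z (X ω) j * ((W ω - e (X ω)) * Y ω - e (X ω) * (1 - e (X ω)) * ∑ k, β k * Z (X ω) k)| ≤ C) := by
  intro ν hν
  have hm : sigmaAlg X ≤ _ := hX.comap_le
  have hXmm : Measurable[sigmaAlg X] X := measurable_iff_comap_le.mpr le_rfl
  have hrpow : Continuous fun x : ℝ => x ^ ν :=
    continuous_iff_continuousAt.mpr fun x => Real.continuousAt_rpow_const x ν (Or.inr hν)
  have hE : Measurable[sigmaAlg X] fun ω => e (X ω) := hem.comp hXmm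
  have hE0 : Measurable fun ω => e (X ω) := hem.comp hX
  have hA : Measurable[sigmaAlg X] fun ω => (e (X ω) * (1 - e (X ω))) ^ ν :=
    hrpow.measurable.comp (hE.mul (measurable_const.sub hE))
  have hA0 : Measurable fun ω => (e (X ω) * (1 - e (X ω))) ^ ν :=
    hrpow.measurable.comp (hE0.mul (measurable_const.sub hE0))
  have hZj : ∀ j : Fin d, Measurable[sigmaAlg X] fun ω => Z (X ω) j :=
    fun j => ((measurable_pi_apply j).comp hZm).comp hXmm
  have hZj0 : ∀ j : Fin d, Measurable fun ω => Z (X ω) j :=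
    fun j => ((measurable_pi_apply j).comp hZm).comp hX
  have hS0 : Measurable fun ω => ∑ k, β k * Z (X ω) k :=
    Finset.measurable_sum _ fun k _ => measurable_const.mul (hZj0 k)
  have hV : Measurable fun ω => (Y0 ω, Y1 ω) := hY0m.prodMk hY1m
  have hW01 : ∀ ω, 0 ≤ W ω ∧ W ω ≤ 1 := by
    intro ω; rcases hWbin ω with h | h <;> rw [h] <;> norm_num
  have hYb : ∀ ω, |Y ω| ≤ 2 * CY := by
    intro ω
    have h1 : |W ω| ≤ 1 := by rcases hWbin ω with h | h <;> simp [h]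
    have h2 : |1 - W ω| ≤ 1 := by rcases hWbin ω with h | h <;> simp [h]
    calc |Y ω| = |W ω * Y1 ω + (1 - W ω) * Y0 ω| := by rw [hSUTVA ω]
      _ ≤ |W ω * Y1 ω| + |(1 - W ω) * Y0 ω| := abs_add_le _ _
      _ ≤ 1 * CY + 1 * CY := add_le_add (abs_mul_le' h1 (hYbdd ω).2) (abs_mul_le' h2 (hYbdd ω).1)
      _ = 2 * CY := by ring
  have hSb : ∀ ω, |∑ k, β k * Z (X ω) k| ≤ ∑ k, |β k| * CZ := by
    intro ω
    refine (Finset.abs_sum_le_sum_abs _ _).trans (Finset.sum_le_sum fun k _ => ?_)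
    rw [abs_mul]
    exact mul_le_mul_of_nonneg_left (hZbdd _ k) (abs_nonneg _)
  have hAb : ∀ᵐ ω ∂P, |(e (X ω) * (1 - e (X ω))) ^ ν| ≤ 1 ∧ |e (X ω)| ≤ 1 ∧
      |1 - e (X ω)| ≤ 1 ∧ |e (X ω) * (1 - e (X ω))| ≤ 1 ∧ |W ω - e (X ω)| ≤ 1 := by
    filter_upwards [hoverlap] with ω h
    obtain ⟨h0, h1⟩ := h
    obtain ⟨hw0, hw1⟩ := hW01 ω
    have hb0 : 0 ≤ e (X ω) * (1 - e (X ω)) := mul_nonneg h0.le (by linarith)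
    have hb1 : e (X ω) * (1 - e (X ω)) ≤ 1 := by nlinarith
    refine ⟨?_, ?_, ?_, ?_, ?_⟩
    · rw [abs_of_nonneg (Real.rpow_nonneg hb0 ν)]
      exact Real.rpow_le_one hb0 hb1 hν
    · rw [abs_of_nonneg h0.le]; linarith
    · rw [abs_of_nonneg (by linarith : (0:ℝ) ≤ 1 - e (X ω))]; linarith
    · rw [abs_of_nonneg hb0]; linarith
    · rw [abs_le]; constructor <;> linarith
  constructor
  · intro j
    -- integrability of the five pieces
    have hY1int : Integrable Y1 P :=
      integrable_of_bdd P hY1m.aestronglyMeasurable (Eventually.of_forall fun ω => (hYbdd ω).2)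
    have hY0int : Integrable Y0 P :=
      integrable_of_bdd P hY0m.aestronglyMeasurable (Eventually.of_forall fun ω => (hYbdd ω).1)
    have hT1int : Integrable
        (fun ω => (e (X ω) * (1 - e (X ω))) ^ ν * Z (X ω) j * (1 - e (X ω)) * (W ω - e (X ω)) * Y1 ω) P := by
      refine integrable_of_bdd P ((((hA0.mul (hZj0 j)).mul (measurable_const.sub hE0)).mul
        (hWm.sub hE0)).mul hY1m).aestronglyMeasurable (C := 1 * CZ * 1 * 1 * CY) ?_
      filter_upwards [hAb] with ω h
      exact abs_mul_le' (abs_mul_le' (abs_mul_le' (abs_mul_le' h.1 (hZbdd _ j)) h.2.2.1)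
        h.2.2.2.2) (hYbdd ω).2
    have hT2int : Integrable
        (fun ω => (e (X ω) * (1 - e (X ω))) ^ ν * Z (X ω) j * e (X ω) * (W ω - e (X ω)) * Y0 ω) P := by
      refine integrable_of_bdd P ((((hA0.mul (hZj0 j)).mul hE0).mul
        (hWm.sub hE0)).mul hY0m).aestronglyMeasurable (C := 1 * CZ * 1 * 1 * CY) ?_
      filter_upwards [hAb] with ω h
      exact abs_mul_le' (abs_mul_le' (abs_mul_le' (abs_mul_le' h.1 (hZbdd _ j)) h.2.1)
        h.2.2.2.2) (hYbdd ω).1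
    have hT3aint : Integrable
        (fun ω => (e (X ω) * (1 - e (X ω))) ^ ν * Z (X ω) j * (e (X ω) * (1 - e (X ω))) * Y1 ω) P := by
      refine integrable_of_bdd P (((hA0.mul (hZj0 j)).mul (hE0.mul (measurable_const.sub hE0))).mul
        hY1m).aestronglyMeasurable (C := 1 * CZ * 1 * CY) ?_
      filter_upwards [hAb] with ω h
      exact abs_mul_le' (abs_mul_le' (abs_mul_le' h.1 (hZbdd _ j)) h.2.2.2.1) (hYbdd ω).2
    have hT3bint : Integrable
        (fun ω => (e (X ω) * (1 - e (X ω))) ^ ν * Z (X ω) j * (e (X ω) * (1 - e (X ω))) * Y0 ω) P := by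
      refine integrable_of_bdd P (((hA0.mul (hZj0 j)).mul (hE0.mul (measurable_const.sub hE0))).mul
        hY0m).aestronglyMeasurable (C := 1 * CZ * 1 * CY) ?_
      filter_upwards [hAb] with ω h
      exact abs_mul_le' (abs_mul_le' (abs_mul_le' h.1 (hZbdd _ j)) h.2.2.2.1) (hYbdd ω).1
    have hT4int : Integrable
        (fun ω => (e (X ω) * (1 - e (X ω))) ^ ν * Z (X ω) j * (e (X ω) * (1 - e (X ω))) *
          ∑ k, β k * Z (X ω) k) P := by
      refine integrable_of_bdd P (((hA0.mul (hZj0 j)).mul (hE0.mul (measurable_const.sub hE0))).mul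
        hS0).aestronglyMeasurable (C := 1 * CZ * 1 * ∑ k, |β k| * CZ) ?_
      filter_upwards [hAb] with ω h
      exact abs_mul_le' (abs_mul_le' (abs_mul_le' h.1 (hZbdd _ j)) h.2.2.2.1) (hSb ω)
    have hμ1int : Integrable
        (fun ω => (e (X ω) * (1 - e (X ω))) ^ ν * Z (X ω) j * (e (X ω) * (1 - e (X ω))) * μ1 (X ω)) P := by
      refine integrable_of_bdd P (((hA0.mul (hZj0 j)).mul (hE0.mul (measurable_const.sub hE0))).mul
        (hμ1m.comp hX)).aestronglyMeasurable (C := 1 * CZ * 1 * Cμ) ?_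
      filter_upwards [hAb] with ω h
      exact abs_mul_le' (abs_mul_le' (abs_mul_le' h.1 (hZbdd _ j)) h.2.2.2.1) (hμbdd (X ω)).2
    have hμ0int : Integrable
        (fun ω => (e (X ω) * (1 - e (X ω))) ^ ν * Z (X ω) j * (e (X ω) * (1 - e (X ω))) * μ0 (X ω)) P := by
      refine integrable_of_bdd P (((hA0.mul (hZj0 j)).mul (hE0.mul (measurable_const.sub hE0))).mul
        (hμ0m.comp hX)).aestronglyMeasurable (C := 1 * CZ * 1 * Cμ) ?_
      filter_upwards [hAb] with ω h
      exact abs_mul_le' (abs_mul_le' (abs_mul_le' h.1 (hZbdd _ j)) h.2.2.2.1) (hμbdd (X ω)).1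
    -- the two "centered" integrals vanish by conditional independence
    have hI1 : ∫ ω, (e (X ω) * (1 - e (X ω))) ^ ν * Z (X ω) j * (1 - e (X ω)) *
        (W ω - e (X ω)) * Y1 ω ∂P = 0 := by
      refine key0 P hm hWm hWbin hV hUnconf
        (φ := fun ω => (e (X ω) * (1 - e (X ω))) ^ ν * Z (X ω) j * (1 - e (X ω)))
        ((hA.mul (hZj j)).mul (measurable_const.sub hE)) (Cφ := 1 * CZ * 1)
        (by filter_upwards [hAb] with ω h;
            exact abs_mul_le' (abs_mul_le' h.1 (hZbdd _ j)) h.2.2.1)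
        hE (Ce := 1) (by filter_upwards [hAb] with ω h; exact h.2.1) hprop
        (ψ := Prod.snd) measurable_snd (Cψ := CY) (fun ω => (hYbdd ω).2)
    have hI2 : ∫ ω, (e (X ω) * (1 - e (X ω))) ^ ν * Z (X ω) j * e (X ω) *
        (W ω - e (X ω)) * Y0 ω ∂P = 0 := by
      refine key0 P hm hWm hWbin hV hUnconf
        (φ := fun ω => (e (X ω) * (1 - e (X ω))) ^ ν * Z (X ω) j * e (X ω))
        ((hA.mul (hZj j)).mul hE) (Cφ := 1 * CZ * 1)
        (by filter_upwards [hAb] with ω h;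
            exact abs_mul_le' (abs_mul_le' h.1 (hZbdd _ j)) h.2.1)
        hE (Ce := 1) (by filter_upwards [hAb] with ω h; exact h.2.1) hprop
        (ψ := Prod.fst) measurable_fst (Cψ := CY) (fun ω => (hYbdd ω).1)
    -- the conditional-mean integrals
    have hI3a : ∫ ω, (e (X ω) * (1 - e (X ω))) ^ ν * Z (X ω) j * (e (X ω) * (1 - e (X ω))) *
        Y1 ω ∂P = ∫ ω, (e (X ω) * (1 - e (X ω))) ^ ν * Z (X ω) j *
          (e (X ω) * (1 - e (X ω))) * μ1 (X ω) ∂P := by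
      have h1 := key2 P hm
        (φ := fun ω => (e (X ω) * (1 - e (X ω))) ^ ν * Z (X ω) j * (e (X ω) * (1 - e (X ω))))
        ((hA.mul (hZj j)).mul (hE.mul (measurable_const.sub hE))).stronglyMeasurable
        hT3aint hY1int
      rw [h1]
      exact integral_congr_ae (by filter_upwards [hμ1c] with ω h; rw [h])
    have hI3b : ∫ ω, (e (X ω) * (1 - e (X ω))) ^ ν * Z (X ω) j * (e (X ω) * (1 - e (X ω))) *
        Y0 ω ∂P = ∫ ω, (e (X ω) * (1 - e (X ω))) ^ ν * Z (X ω) j *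
          (e (X ω) * (1 - e (X ω))) * μ0 (X ω) ∂P := by
      have h1 := key2 P hm
        (φ := fun ω => (e (X ω) * (1 - e (X ω))) ^ ν * Z (X ω) j * (e (X ω) * (1 - e (X ω))))
        ((hA.mul (hZj j)).mul (hE.mul (measurable_const.sub hE))).stronglyMeasurable
        hT3bint hY0int
      rw [h1]
      exact integral_congr_ae (by filter_upwards [hμ0c] with ω h; rw [h])
    have hI34 : (∫ ω, (e (X ω) * (1 - e (X ω))) ^ ν * Z (X ω) j * (e (X ω) * (1 - e (X ω))) *
          μ1 (X ω) ∂P) - (∫ ω, (e (X ω) * (1 - e (X ω))) ^ ν * Z (X ω) j *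
          (e (X ω) * (1 - e (X ω))) * μ0 (X ω) ∂P)
        = ∫ ω, (e (X ω) * (1 - e (X ω))) ^ ν * Z (X ω) j * (e (X ω) * (1 - e (X ω))) *
          ∑ k, β k * Z (X ω) k ∂P := by
      rw [← integral_sub hμ1int hμ0int]
      refine integral_congr_ae (Eventually.of_forall fun ω => ?_)
      have hτ := hlinCATE (X ω)
      calc (e (X ω) * (1 - e (X ω))) ^ ν * Z (X ω) j * (e (X ω) * (1 - e (X ω))) * μ1 (X ω) -
            (e (X ω) * (1 - e (X ω))) ^ ν * Z (X ω) j * (e (X ω) * (1 - e (X ω))) * μ0 (X ω)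
          = (e (X ω) * (1 - e (X ω))) ^ ν * Z (X ω) j * (e (X ω) * (1 - e (X ω))) *
            (μ1 (X ω) - μ0 (X ω)) := by ring
        _ = _ := by rw [hτ]
    -- pointwise decomposition
    have hptw : (fun ω => (e (X ω) * (1 - e (X ω))) ^ ν * Z (X ω) j *
          ((W ω - e (X ω)) * Y ω - e (X ω) * (1 - e (X ω)) * ∑ k, β k * Z (X ω) k))
        = fun ω =>
          (e (X ω) * (1 - e (X ω))) ^ ν * Z (X ω) j * (1 - e (X ω)) * (W ω - e (X ω)) * Y1 ω +
          (e (X ω) * (1 - e (X ω))) ^ ν * Z (X ω) j * e (X ω) * (W ω - e (X ω)) * Y0 ω +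
          ((e (X ω) * (1 - e (X ω))) ^ ν * Z (X ω) j * (e (X ω) * (1 - e (X ω))) * Y1 ω -
           (e (X ω) * (1 - e (X ω))) ^ ν * Z (X ω) j * (e (X ω) * (1 - e (X ω))) * Y0 ω) -
          (e (X ω) * (1 - e (X ω))) ^ ν * Z (X ω) j * (e (X ω) * (1 - e (X ω))) *
            ∑ k, β k * Z (X ω) k := by
      funext ω
      rcases hWbin ω with h | h <;> rw [hSUTVA ω, h] <;> ring
    rw [hptw]
    have e4 : ∫ ω, ((e (X ω) * (1 - e (X ω))) ^ ν * Z (X ω) j * (1 - e (X ω)) * (W ω - e (X ω)) * Y1 ω + (e (X ω) * (1 - e (X ω))) ^ ν * Z (X ω) j * e (X ω) * (W ω - e (X ω)) * Y0 ω + ((e (X ω) * (1 - e (X ω))) ^ ν * Z (X ω) j * (e (X ω) * (1 - e (X ω))) * Y1 ω - (e (X ω) * (1 - e (X ω))) ^ ν * Z (X ω) j * (e (X ω) * (1 - e (X ω))) * Y0 ω) - ((e (X ω) * (1 - e (X ω))) ^ ν * Z (X ω) j * (e (X ω) * (1 - e (X ω))) * ∑ k, β k * Z (X ω) k)) ∂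P
        = (∫ ω, ((e (X ω) * (1 - e (X ω))) ^ ν * Z (X ω) j * (1 - e (X ω)) * (W ω - e (X ω)) * Y1 ω + (e (X ω) * (1 - e (X ω))) ^ ν * Z (X ω) j * e (X ω) * (W ω - e (X ω)) * Y0 ω + ((e (X ω) * (1 - e (X ω))) ^ ν * Z (X ω) j * (e (X ω) * (1 - e (X ω))) * Y1 ω - (e (X ω) * (1 - e (X ω))) ^ ν * Z (X ω) j * (e (X ω) * (1 - e (X ω))) * Y0 ω)) ∂P) - ∫ ω, (e (X ω) * (1 - e (X ω))) ^ ν * Z (X ω) j * (e (X ω) * (1 - e (X ω))) * ∑ k, β k * Z (X ω) k ∂P :=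
      integral_sub ((hT1int.add hT2int).add (hT3aint.sub hT3bint)) hT4int
    have e3 : ∫ ω, ((e (X ω) * (1 - e (X ω))) ^ ν * Z (X ω) j * (1 - e (X ω)) * (W ω - e (X ω)) * Y1 ω + (e (X ω) * (1 - e (X ω))) ^ ν * Z (X ω) j * e (X ω) * (W ω - e (X ω)) * Y0 ω + ((e (X ω) * (1 - e (X ω))) ^ ν * Z (X ω) j * (e (X ω) * (1 - e (X ω))) * Y1 ω - (e (X ω) * (1 - e (X ω))) ^ ν * Z (X ω) j * (e (X ω) * (1 - e (X ω))) * Y0 ω)) ∂P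
        = (∫ ω, ((e (X ω) * (1 - e (X ω))) ^ ν * Z (X ω) j * (1 - e (X ω)) * (W ω - e (X ω)) * Y1 ω + (e (X ω) * (1 - e (X ω))) ^ ν * Z (X ω) j * e (X ω) * (W ω - e (X ω)) * Y0 ω) ∂P) + ∫ ω, ((e (X ω) * (1 - e (X ω))) ^ ν * Z (X ω) j * (e (X ω) * (1 - e (X ω))) * Y1 ω - (e (X ω) * (1 - e (X ω))) ^ ν * Z (X ω) j * (e (X ω) * (1 - e (X ω))) * Y0 ω) ∂P :=
      integral_add (hT1int.add hT2int) (hT3aint.sub hT3bint)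
    have e2' := integral_add hT1int hT2int
    have e1' := integral_sub hT3aint hT3bint
    rw [e4, e3, e2', e1', hI1, hI2, hI3a, hI3b, hI34]
    ring
  · refine ⟨1 * CZ * (1 * (2 * CY) + 1 * ∑ k, |β k| * CZ), ?_⟩
    filter_upwards [hAb] with ω h
    intro j
    obtain ⟨ha, he1, he2, hee, hwe⟩ := h
    refine abs_mul_le' (abs_mul_le' ha (hZbdd _ j)) ?_
    calc |(W ω - e (X ω)) * Y ω - e (X ω) * (1 - e (X ω)) * ∑ k, β k * Z (X ω) k|
        ≤ |(W ω - e (X ω)) * Y ω| + |e (X ω) * (1 - e (X ω)) * ∑ k, β k * Z (X ω) k| :=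
          abs_sub _ _
      _ ≤ 1 * (2 * CY) + 1 * ∑ k, |β k| * CZ :=
          add_le_add (abs_mul_le' hwe (hYb ω)) (abs_mul_le' hee (hSb ω))
end

section
/- Let the generalized residual be Ψ = S(X,W)·τ(X) − s̃(X)·(W−e(X))·Y + ξ(X,W), where S and ξ are bounded measurable real functions on 𝒳×{0,1} with E[ξ(X,W) | σ(X)] = 0 a.s., s(X) = E[S(X,W) | σ(X)], s̃(X) = s(X)/(e(X)(1−e(X))), and 0 < s̃(X) ≤ M a.s. for some constant M > 0 (the Stable Probability Weighting principle). Then under unconfoundedness, SUTVA, population overlap and bounded outcomes, E[Ψ | σ(X)] = 0 a.s. and the conditional variance E[Ψ² | σ(X)] is almost surely finite (indeed a.s. bounded). -/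
open MeasureTheory ProbabilityTheory Filter Set

open scoped ENNReal NNReal

namespace SPWaux

variable {Ω : Type*} {mΩ : MeasurableSpace Ω} {μ : Measure Ω}

lemma integrable_of_bdd [IsFiniteMeasure μ] {f : Ω → ℝ} {c : ℝ}
    (hf : Measurable f) (h : ∀ᵐ ω ∂μ, |f ω| ≤ c) : Integrable f μ :=
  (integrable_const c).mono' hf.aestronglyMeasurable (by simpa [Real.norm_eq_abs] using h)

lemma key_integral_eq {V : Ω → ℝ} (hV : Measurable V)
    {d₁ d₂ : Ω → ℝ≥0} (h₁ : Measurable d₁) (h₂ : Measurable d₂)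
    (H : ∀ t : Set ℝ, MeasurableSet t →
      ∫⁻ ω in V ⁻¹' t, (d₁ ω : ℝ≥0∞) ∂μ = ∫⁻ ω in V ⁻¹' t, (d₂ ω : ℝ≥0∞) ∂μ) :
    ∫ ω, (d₁ ω : ℝ) * V ω ∂μ = ∫ ω, (d₂ ω : ℝ) * V ω ∂μ := by
  have hle : MeasurableSpace.comap V inferInstance ≤ mΩ := hV.comap_le
  have hVm : Measurable[MeasurableSpace.comap V inferInstance] V := comap_measurable V
  have htrim : (μ.withDensity fun ω => (d₁ ω : ℝ≥0∞)).trim hle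
      = (μ.withDensity fun ω => (d₂ ω : ℝ≥0∞)).trim hle := by
    refine @Measure.ext Ω (MeasurableSpace.comap V inferInstance) _ _ fun u hu => ?_
    obtain ⟨t, ht, rfl⟩ := hu
    rw [trim_measurableSet_eq hle ⟨t, ht, rfl⟩, trim_measurableSet_eq hle ⟨t, ht, rfl⟩,
      withDensity_apply _ (hV ht), withDensity_apply _ (hV ht)]
    exact H t ht
  have e1 : ∫ ω, (d₁ ω : ℝ) * V ω ∂μ = ∫ ω, V ω ∂(μ.withDensity fun ω => (d₁ ω : ℝ≥0∞)) := by
    rw [integral_withDensity_eq_integral_smul h₁]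
    simp [NNReal.smul_def]
  have e2 : ∫ ω, (d₂ ω : ℝ) * V ω ∂μ = ∫ ω, V ω ∂(μ.withDensity fun ω => (d₂ ω : ℝ≥0∞)) := by
    rw [integral_withDensity_eq_integral_smul h₂]
    simp [NNReal.smul_def]
  rw [e1, e2, integral_trim hle hVm.stronglyMeasurable,
    integral_trim hle hVm.stronglyMeasurable, htrim]


end SPWaux

namespace SPWaux

lemma condExp_mul_of_indep {Ω : Type*} {m' : MeasurableSpace Ω} {mΩ : MeasurableSpace Ω}
    {μ : Measure Ω} [IsProbabilityMeasure μ] (hm' : m' ≤ mΩ)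
    {A : Set Ω} (hA : MeasurableSet A) {V : Ω → ℝ} (hV : Measurable V)
    {c : ℝ} (hVb : ∀ ω, |V ω| ≤ c)
    (H : ∀ t : Set ℝ, MeasurableSet t →
      (μ⟦A ∩ V ⁻¹' t | m'⟧) =ᵐ[μ] fun ω => (μ⟦A | m'⟧) ω * (μ⟦V ⁻¹' t | m'⟧) ω) :
    μ[fun ω => A.indicator (fun _ => (1:ℝ)) ω * V ω | m'] =ᵐ[μ]
      fun ω => (μ⟦A | m'⟧) ω * (μ[V | m']) ω := by
  classical
  have hVint : Integrable V μ := integrable_of_bdd hV (ae_of_all _ hVb)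
  set EA := (μ⟦A | m'⟧) with hEAdef
  set EV := (μ[V | m']) with hEVdef
  have hEA_sm : StronglyMeasurable[m'] EA := stronglyMeasurable_condExp
  have hEA_meas : Measurable EA := (hEA_sm.mono hm').measurable
  have hEV_meas : Measurable EV := (stronglyMeasurable_condExp.mono hm').measurable
  have hind_meas : Measurable (A.indicator (fun _ => (1:ℝ))) := measurable_const.indicator hA
  have hindint : Integrable (A.indicator fun _ => (1:ℝ)) μ :=
    (integrable_const (1:ℝ)).indicator hA
  have hind01 : ∀ ω, 0 ≤ A.indicator (fun _ => (1:ℝ)) ω ∧ A.indicator (fun _ => (1:ℝ)) ω ≤ 1 := by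
    intro ω; by_cases hω : ω ∈ A <;> simp [Set.indicator_of_mem, Set.indicator_of_notMem, hω]
  have hEA0 : 0 ≤ᵐ[μ] EA := condExp_nonneg (ae_of_all _ fun ω => (hind01 ω).1)
  have hEA1 : EA ≤ᵐ[μ] fun _ => (1:ℝ) := by
    refine (condExp_mono hindint (integrable_const (1:ℝ))
      (ae_of_all _ fun ω => (hind01 ω).2)).trans ?_
    exact Eventually.of_forall (fun ω => le_of_eq (congrFun (condExp_const (μ := μ) hm' (1:ℝ)) ω))
  have hEAb : ∀ᵐ ω ∂μ, ‖EA ω‖ ≤ 1 := by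
    filter_upwards [hEA0, hEA1] with ω h0 h1
    rw [Real.norm_eq_abs, abs_of_nonneg h0]; exact h1
  -- the two densities
  set d₁ : Ω → ℝ≥0 := A.indicator (fun _ => (1:ℝ≥0)) with hd₁def
  set d₂ : Ω → ℝ≥0 := fun ω => Real.toNNReal (min (EA ω) 1) with hd₂def
  have hd₁m : Measurable d₁ := measurable_const.indicator hA
  have hd₂m : Measurable d₂ := ((hEA_meas.min measurable_const)).real_toNNReal
  have hd₁coe : ∀ ω, ((d₁ ω : ℝ)) = A.indicator (fun _ => (1:ℝ)) ω := by
    intro ω; by_cases hω : ω ∈ A <;>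
      simp [hd₁def, Set.indicator_of_mem, Set.indicator_of_notMem, hω]
  have hd₂coe : (fun ω => (d₂ ω : ℝ)) =ᵐ[μ] EA := by
    filter_upwards [hEA0, hEA1] with ω h0 h1
    simp only [hd₂def]
    rw [min_eq_left h1, Real.coe_toNNReal _ h0]
  have hd₁b : ∀ ω, ((d₁ ω : ℝ)) ≤ 1 := fun ω => by rw [hd₁coe ω]; exact (hind01 ω).2
  have hd₂b : ∀ ω, ((d₂ ω : ℝ)) ≤ 1 := by
    intro ω
    simp only [hd₂def, Real.coe_toNNReal']
    exact max_le (min_le_right _ _) zero_le_one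
  have hEVb : ∀ᵐ ω ∂μ, ‖EV ω‖ ≤ ‖c‖ := by
    have := ae_bdd_condExp_of_ae_bdd (μ := μ) (m := m') (R := Real.toNNReal c) (f := V)
      (ae_of_all _ fun ω => (hVb ω).trans (Real.le_coe_toNNReal c))
    filter_upwards [this] with ω hω
    rw [Real.norm_eq_abs]
    exact hω.trans ((Real.coe_toNNReal' c) ▸ (max_le (le_abs_self c) (abs_nonneg c)) :
      ((Real.toNNReal c : ℝ)) ≤ |c|)
  have hgint : Integrable (fun ω => EA ω * EV ω) μ :=
    integrable_of_bdd (hEA_meas.mul hEV_meas)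
      (by filter_upwards [hEAb, hEVb] with ω h1 h2
          rw [abs_mul]
          calc |EA ω| * |EV ω| ≤ 1 * ‖c‖ := by
                exact mul_le_mul h1 h2 (abs_nonneg _) zero_le_one
            _ = ‖c‖ := one_mul _)
  have hfint : Integrable (fun ω => A.indicator (fun _ => (1:ℝ)) ω * V ω) μ :=
    integrable_of_bdd (hind_meas.mul hV)
      (ae_of_all _ fun ω => by
        rw [abs_mul]
        calc |A.indicator (fun _ => (1:ℝ)) ω| * |V ω| ≤ 1 * |c| := by
              refine mul_le_mul ?_ ((hVb ω).trans (le_abs_self c)) (abs_nonneg _) zero_le_one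
              rw [abs_of_nonneg (hind01 ω).1]; exact (hind01 ω).2
          _ = |c| := one_mul _)
  -- pull-out helper
  have hpull : ∀ {g : Ω → ℝ}, Integrable g μ →
      μ[fun ω => EA ω * g ω | m'] =ᵐ[μ] fun ω => EA ω * (μ[g | m']) ω := by
    intro g hg
    have := condExp_stronglyMeasurable_mul_of_bound hm' hEA_sm hg 1 hEAb
    simpa only [Pi.mul_def] using this
  refine (ae_eq_condExp_of_forall_setIntegral_eq hm' hfint
    (fun u hu hμu => hgint.integrableOn) ?_
    ((hEA_sm.mul stronglyMeasurable_condExp).aestronglyMeasurable)).symm.trans ?_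
  swap
  · exact EventuallyEq.rfl
  intro u hu hμu
  have hmu : MeasurableSet u := hm' u hu
  have step1 : ∫ x in u, EA x * EV x ∂μ = ∫ x in u, EA x * V x ∂μ := by
    have h1 : ∫ x in u, EA x * EV x ∂μ = ∫ x in u, (μ[fun ω => EA ω * V ω | m']) x ∂μ :=
      integral_congr_ae (ae_restrict_of_ae (hpull hVint).symm)
    rw [h1, setIntegral_condExp hm' (f := fun ω => EA ω * V ω) (integrable_of_bdd (hEA_meas.mul hV)
      (by filter_upwards [hEAb] with ω h1
          rw [abs_mul]
          calc |EA ω| * |V ω| ≤ 1 * |c| :=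
                mul_le_mul h1 ((hVb ω).trans (le_abs_self c)) (abs_nonneg _) zero_le_one
            _ = |c| := one_mul _)) hu]
  rw [step1]
  -- now the key step via measures
  have hres : IsFiniteMeasure (μ.restrict u) := inferInstance
  have H' : ∀ t : Set ℝ, MeasurableSet t →
      ∫⁻ ω in V ⁻¹' t, (d₂ ω : ℝ≥0∞) ∂(μ.restrict u)
        = ∫⁻ ω in V ⁻¹' t, (d₁ ω : ℝ≥0∞) ∂(μ.restrict u) := by
    intro t ht
    have htm : MeasurableSet (V ⁻¹' t) := hV ht
    -- Bochner equality from H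
    have hBint : Integrable ((A ∩ V ⁻¹' t).indicator fun _ => (1:ℝ)) μ :=
      (integrable_const (1:ℝ)).indicator (hA.inter htm)
    have hIndTint : Integrable ((V ⁻¹' t).indicator fun _ => (1:ℝ)) μ :=
      (integrable_const (1:ℝ)).indicator htm
    have hlhs : ∫ x in u, ((A ∩ V ⁻¹' t).indicator fun _ => (1:ℝ)) x ∂μ
        = ∫ x in u, (μ⟦A ∩ V ⁻¹' t | m'⟧) x ∂μ := (setIntegral_condExp hm' hBint hu).symm
    have hrhs : ∫ x in u, EA x * (μ⟦V ⁻¹' t | m'⟧) x ∂μ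
        = ∫ x in u, EA x * ((V ⁻¹' t).indicator fun _ => (1:ℝ)) x ∂μ := by
      have h1 : ∫ x in u, EA x * (μ⟦V ⁻¹' t | m'⟧) x ∂μ
          = ∫ x in u, (μ[fun ω => EA ω * ((V ⁻¹' t).indicator fun _ => (1:ℝ)) ω | m']) x ∂μ :=
        integral_congr_ae (ae_restrict_of_ae (hpull hIndTint).symm)
      rw [h1, setIntegral_condExp hm' (f := fun ω => EA ω * ((V ⁻¹' t).indicator fun _ => (1:ℝ)) ω) (integrable_of_bdd
        (hEA_meas.mul (measurable_const.indicator htm))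
        (by filter_upwards [hEAb] with ω h1
            rw [abs_mul]
            have h2 : |((V ⁻¹' t).indicator fun _ => (1:ℝ)) ω| ≤ 1 := by
              by_cases hω : ω ∈ V ⁻¹' t <;>
                simp [Set.indicator_of_mem, Set.indicator_of_notMem, hω]
            calc |EA ω| * _ ≤ 1 * 1 := mul_le_mul h1 h2 (abs_nonneg _) zero_le_one
              _ = 1 := one_mul _)) hu]
    have hBeq : ∫ x in u, ((A ∩ V ⁻¹' t).indicator fun _ => (1:ℝ)) x ∂μ
        = ∫ x in u, EA x * ((V ⁻¹' t).indicator fun _ => (1:ℝ)) x ∂μ := by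
      rw [hlhs, ← hrhs]
      exact integral_congr_ae (ae_restrict_of_ae (H t ht))
    -- convert both lintegrals
    rw [Measure.restrict_restrict htm]
    have hμf : IsFiniteMeasure (μ.restrict (V ⁻¹' t ∩ u)) := inferInstance
    rw [lintegral_coe_eq_integral d₂ (integrable_of_bdd
        (hd₂m.coe_nnreal_real)
        (ae_of_all _ fun ω => by rw [abs_of_nonneg (d₂ ω).coe_nonneg]; exact hd₂b ω)),
      lintegral_coe_eq_integral d₁ (integrable_of_bdd
        (hd₁m.coe_nnreal_real)
        (ae_of_all _ fun ω => by rw [abs_of_nonneg (d₁ ω).coe_nonneg]; exact hd₁b ω))]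
    congr 1
    -- d₂ side
    have e2 : ∫ ω, (d₂ ω : ℝ) ∂(μ.restrict (V ⁻¹' t ∩ u)) = ∫ ω in V ⁻¹' t ∩ u, EA ω ∂μ :=
      integral_congr_ae (ae_restrict_of_ae hd₂coe)
    -- d₁ side
    have e1 : ∫ ω, (d₁ ω : ℝ) ∂(μ.restrict (V ⁻¹' t ∩ u)) = ∫ ω in (V ⁻¹' t ∩ u) ∩ A, (1:ℝ) ∂μ := by
      rw [show (fun ω => (d₁ ω : ℝ)) = A.indicator (fun _ => (1:ℝ)) from funext hd₁coe]
      exact setIntegral_indicator hA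
    rw [e1, e2]
    -- compare with hBeq
    have hL : ∫ x in u, ((A ∩ V ⁻¹' t).indicator fun _ => (1:ℝ)) x ∂μ
        = ∫ x in (V ⁻¹' t ∩ u) ∩ A, (1:ℝ) ∂μ := by
      have hset : u ∩ (A ∩ V ⁻¹' t) = (V ⁻¹' t ∩ u) ∩ A := by
        ext ω
        simp only [Set.mem_inter_iff]
        tauto
      rw [setIntegral_indicator (hA.inter htm), hset]
    have hR : ∫ x in u, EA x * ((V ⁻¹' t).indicator fun _ => (1:ℝ)) x ∂μ
        = ∫ ω in V ⁻¹' t ∩ u, EA ω ∂μ := by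
      have : (fun x => EA x * ((V ⁻¹' t).indicator fun _ => (1:ℝ)) x)
          = (V ⁻¹' t).indicator EA := by
        funext ω
        by_cases hω : ω ∈ V ⁻¹' t <;> simp [Set.indicator, hω]
      rw [this, setIntegral_indicator htm, Set.inter_comm]
    rw [← hR, ← hL, hBeq]
  have hkey := key_integral_eq (μ := μ.restrict u) hV hd₂m hd₁m H'
  have hk2 : ∫ ω, (d₂ ω : ℝ) * V ω ∂(μ.restrict u) = ∫ x in u, EA x * V x ∂μ :=
    integral_congr_ae (ae_restrict_of_ae (hd₂coe.mul EventuallyEq.rfl))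
  have hk1 : ∫ ω, (d₁ ω : ℝ) * V ω ∂(μ.restrict u)
      = ∫ x in u, A.indicator (fun _ => (1:ℝ)) x * V x ∂μ := by
    refine integral_congr_ae (ae_of_all _ fun ω => ?_)
    show (d₁ ω : ℝ) * V ω = A.indicator (fun _ => (1:ℝ)) ω * V ω
    rw [hd₁coe ω]
  rw [← hk2, hkey, hk1]

end SPWaux

theorem stmt_2
    {Ω 𝒳 : Type*} [MeasurableSpace Ω] [StandardBorelSpace Ω] [MeasurableSpace 𝒳]
    (P : Measure Ω) [IsProbabilityMeasure P]
    (X : Ω → 𝒳) (hX : Measurable X)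
    (W : Ω → ℝ) (hWm : Measurable W) (hWbin : ∀ ω, W ω = 0 ∨ W ω = 1)
    (Y0 Y1 : Ω → ℝ) (hY0m : Measurable Y0) (hY1m : Measurable Y1)
    (CY : ℝ) (hYbdd : ∀ ω, |Y0 ω| ≤ CY ∧ |Y1 ω| ≤ CY)
    (Y : Ω → ℝ) (hSUTVA : ∀ ω, Y ω = W ω * Y1 ω + (1 - W ω) * Y0 ω)
    (hUnconf : CondIndepFun (sigmaAlg X) hX.comap_le W (fun ω => (Y0 ω, Y1 ω)) P)
    (e : 𝒳 → ℝ) (hem : Measurable e)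
    (hprop : P[W|sigmaAlg X] =ᵐ[P] (fun ω => e (X ω)))
    (hoverlap : ∀ᵐ ω ∂P, 0 < e (X ω) ∧ e (X ω) < 1)
    (μ0 μ1 : 𝒳 → ℝ) (hμ0m : Measurable μ0) (hμ1m : Measurable μ1)
    (Cμ : ℝ) (hμbdd : ∀ x, |μ0 x| ≤ Cμ ∧ |μ1 x| ≤ Cμ)
    (hμ0c : P[Y0|sigmaAlg X] =ᵐ[P] (fun ω => μ0 (X ω)))
    (hμ1c : P[Y1|sigmaAlg X] =ᵐ[P] (fun ω => μ1 (X ω)))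
    (S ξ : 𝒳 × ℝ → ℝ) (hSm : Measurable S) (hξm : Measurable ξ)
    (CS : ℝ) (hSbdd : ∀ q, |S q| ≤ CS) (Cξ : ℝ) (hξbdd : ∀ q, |ξ q| ≤ Cξ)
    (hξ0 : P[(fun ω => ξ (X ω, W ω))|sigmaAlg X] =ᵐ[P] 0)
    (s : 𝒳 → ℝ) (hsm : Measurable s)
    (hs : P[(fun ω => S (X ω, W ω))|sigmaAlg X] =ᵐ[P] (fun ω => s (X ω)))
    (M : ℝ) (hM : 0 < M)
    (hstil : ∀ᵐ ω ∂P, 0 < s (X ω) / (e (X ω) * (1 - e (X ω))) ∧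
      s (X ω) / (e (X ω) * (1 - e (X ω))) ≤ M) :
    P[(fun ω => S (X ω, W ω) * (μ1 (X ω) - μ0 (X ω)) - (s (X ω) / (e (X ω) * (1 - e (X ω)))) * (W ω - e (X ω)) * Y ω + ξ (X ω, W ω))|sigmaAlg X] =ᵐ[P] 0 ∧
    ∃ C : ℝ, ∀ᵐ ω ∂P, (P[(fun ω' => (S (X ω', W ω') * (μ1 (X ω') - μ0 (X ω')) - (s (X ω') / (e (X ω') * (1 - e (X ω')))) * (W ω' - e (X ω')) * Y ω' + ξ (X ω', W ω')) ^ 2)|sigmaAlg X]) ω ≤ C := by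
  classical
  have hm' : sigmaAlg X ≤ ‹MeasurableSpace Ω› := hX.comap_le
  have hXm' : Measurable[(sigmaAlg X)] X := comap_measurable X
  -- measurability facts
  have heX : Measurable fun ω => e (X ω) := hem.comp hX
  have hsX : Measurable fun ω => s (X ω) := hsm.comp hX
  have hstX : Measurable fun ω => s (X ω) / (e (X ω) * (1 - e (X ω))) :=
    hsX.div (heX.mul (measurable_const.sub heX))
  have hSW : Measurable fun ω => S (X ω, W ω) := hSm.comp (hX.prodMk hWm)
  have hξW : Measurable fun ω => ξ (X ω, W ω) := hξm.comp (hX.prodMk hWm)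
  have hYm : Measurable Y := by
    have : Y = fun ω => W ω * Y1 ω + (1 - W ω) * Y0 ω := funext hSUTVA
    rw [this]
    exact (hWm.mul hY1m).add ((measurable_const.sub hWm).mul hY0m)
  have smτ : StronglyMeasurable[(sigmaAlg X)] fun ω => μ1 (X ω) - μ0 (X ω) :=
    ((hμ1m.sub hμ0m).comp hXm').stronglyMeasurable
  have smst : StronglyMeasurable[(sigmaAlg X)] fun ω => s (X ω) / (e (X ω) * (1 - e (X ω))) :=
    ((hsm.div (hem.mul (measurable_const.sub hem))).comp hXm').stronglyMeasurable
  have smeX : StronglyMeasurable[(sigmaAlg X)] fun ω => e (X ω) := (hem.comp hXm').stronglyMeasurable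
  -- bounds
  have hYb : ∀ ω, |Y ω| ≤ |CY| := by
    intro ω
    rcases hWbin ω with h | h <;> simp only [hSUTVA ω, h]
    · simpa using (hYbdd ω).1.trans (le_abs_self CY)
    · simpa using (hYbdd ω).2.trans (le_abs_self CY)
  have hWb : ∀ ω, |W ω| ≤ 1 := by
    intro ω; rcases hWbin ω with h | h <;> simp [h]
  have hτb : ∀ ω, |μ1 (X ω) - μ0 (X ω)| ≤ 2 * |Cμ| := by
    intro ω
    refine (abs_sub _ _).trans ?_
    have h1 := (hμbdd (X ω)).1
    have h2 := (hμbdd (X ω)).2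
    have := le_abs_self Cμ
    linarith
  have hstb : ∀ᵐ ω ∂P, |s (X ω) / (e (X ω) * (1 - e (X ω)))| ≤ M := by
    filter_upwards [hstil] with ω h
    rw [abs_of_pos h.1]; exact h.2
  have hWe : ∀ᵐ ω ∂P, |W ω - e (X ω)| ≤ 1 := by
    filter_upwards [hoverlap] with ω h
    obtain ⟨h0, h1⟩ := h
    rcases hWbin ω with hw | hw <;> rw [hw]
    · rw [zero_sub, abs_neg, abs_of_pos h0]; linarith
    · rw [abs_of_nonneg (by linarith)]; linarith
  have heb : ∀ᵐ ω ∂P, ‖e (X ω)‖ ≤ 1 := by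
    filter_upwards [hoverlap] with ω h
    rw [Real.norm_eq_abs, abs_of_pos h.1]; linarith [h.2]
  -- integrability
  have int_Y : Integrable Y P := SPWaux.integrable_of_bdd hYm (ae_of_all _ hYb)
  have int_Y0 : Integrable Y0 P :=
    SPWaux.integrable_of_bdd hY0m (ae_of_all _ fun ω => (hYbdd ω).1.trans (le_abs_self CY))
  have int_WY1 : Integrable (fun ω => W ω * Y1 ω) P := by
    refine SPWaux.integrable_of_bdd (c := |CY|) (hWm.mul hY1m) (ae_of_all _ fun ω => ?_)
    rw [abs_mul]
    calc |W ω| * |Y1 ω| ≤ 1 * |CY| :=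
          mul_le_mul (hWb ω) ((hYbdd ω).2.trans (le_abs_self CY)) (abs_nonneg _) zero_le_one
      _ = |CY| := one_mul _
  have int_WY0 : Integrable (fun ω => W ω * Y0 ω) P := by
    refine SPWaux.integrable_of_bdd (c := |CY|) (hWm.mul hY0m) (ae_of_all _ fun ω => ?_)
    rw [abs_mul]
    calc |W ω| * |Y0 ω| ≤ 1 * |CY| :=
          mul_le_mul (hWb ω) ((hYbdd ω).1.trans (le_abs_self CY)) (abs_nonneg _) zero_le_one
      _ = |CY| := one_mul _
  have int_SW : Integrable (fun ω => S (X ω, W ω)) P :=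
    SPWaux.integrable_of_bdd hSW (ae_of_all _ fun ω => (hSbdd _).trans (le_abs_self CS))
  have int_ξ : Integrable (fun ω => ξ (X ω, W ω)) P :=
    SPWaux.integrable_of_bdd hξW (ae_of_all _ fun ω => (hξbdd _).trans (le_abs_self Cξ))
  have int_eY : Integrable (fun ω => e (X ω) * Y ω) P := by
    refine SPWaux.integrable_of_bdd (c := |CY|) (heX.mul hYm) ?_
    filter_upwards [heb] with ω h
    rw [abs_mul]
    calc |e (X ω)| * |Y ω| ≤ 1 * |CY| :=
          mul_le_mul h (hYb ω) (abs_nonneg _) zero_le_one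
      _ = |CY| := one_mul _
  have int_WeY : Integrable (fun ω => (W ω - e (X ω)) * Y ω) P := by
    refine SPWaux.integrable_of_bdd (c := |CY|) ((hWm.sub heX).mul hYm) ?_
    filter_upwards [hWe] with ω h
    rw [abs_mul]
    calc |W ω - e (X ω)| * |Y ω| ≤ 1 * |CY| :=
          mul_le_mul h (hYb ω) (abs_nonneg _) zero_le_one
      _ = |CY| := one_mul _
  have int_f1 : Integrable (fun ω => S (X ω, W ω) * (μ1 (X ω) - μ0 (X ω))) P := by
    refine SPWaux.integrable_of_bdd (c := |CS| * (2 * |Cμ|)) (hSW.mul ((hμ1m.comp hX).sub (hμ0m.comp hX)))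
      (ae_of_all _ fun ω => ?_)
    rw [abs_mul]
    exact mul_le_mul ((hSbdd _).trans (le_abs_self CS)) (hτb ω) (abs_nonneg _) (abs_nonneg _)
  have int_f2 : Integrable
      (fun ω => (s (X ω) / (e (X ω) * (1 - e (X ω)))) * (W ω - e (X ω)) * Y ω) P := by
    refine SPWaux.integrable_of_bdd (c := M * |CY|) ((hstX.mul (hWm.sub heX)).mul hYm) ?_
    filter_upwards [hstb, hWe] with ω h1 h2
    rw [abs_mul, abs_mul]
    calc |s (X ω) / (e (X ω) * (1 - e (X ω)))| * |W ω - e (X ω)| * |Y ω| ≤ M * 1 * |CY| :=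
          mul_le_mul (mul_le_mul h1 h2 (abs_nonneg _) hM.le) (hYb ω) (abs_nonneg _)
            (by positivity)
      _ = M * |CY| := by ring
  -- consequences of conditional independence
  set A := W ⁻¹' {1} with hAdef
  have hA : MeasurableSet A := hWm (measurableSet_singleton 1)
  have hWind : W = A.indicator (fun _ => (1:ℝ)) := by
    funext ω
    rcases hWbin ω with h | h <;>
      simp [hAdef, Set.indicator_apply, Set.mem_preimage, h]
  have Hst := (condIndepFun_iff_condExp_inter_preimage_eq_mul (μ := P)
    hWm (hY0m.prodMk hY1m)).mp hUnconf
  have hWcond : (P⟦A | (sigmaAlg X)⟧) =ᵐ[P] fun ω => e (X ω) := by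
    rw [← hWind]; exact hprop
  have hWY1 : P[fun ω => W ω * Y1 ω|(sigmaAlg X)] =ᵐ[P] fun ω => e (X ω) * μ1 (X ω) := by
    have H1 : ∀ t : Set ℝ, MeasurableSet t →
        (P⟦A ∩ Y1 ⁻¹' t | (sigmaAlg X)⟧) =ᵐ[P] fun ω => (P⟦A | (sigmaAlg X)⟧) ω * (P⟦Y1 ⁻¹' t | (sigmaAlg X)⟧) ω :=
      fun t ht => Hst {1} (Prod.snd ⁻¹' t) (measurableSet_singleton 1) (measurable_snd ht)
    have hmul := SPWaux.condExp_mul_of_indep hm' hA hY1m (fun ω => (hYbdd ω).2) H1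
    refine EventuallyEq.trans ?_ (hmul.trans (hWcond.mul hμ1c))
    refine condExp_congr_ae (ae_of_all _ fun ω => ?_)
    rw [hWind]
  have hWY0 : P[fun ω => W ω * Y0 ω|(sigmaAlg X)] =ᵐ[P] fun ω => e (X ω) * μ0 (X ω) := by
    have H0 : ∀ t : Set ℝ, MeasurableSet t →
        (P⟦A ∩ Y0 ⁻¹' t | (sigmaAlg X)⟧) =ᵐ[P] fun ω => (P⟦A | (sigmaAlg X)⟧) ω * (P⟦Y0 ⁻¹' t | (sigmaAlg X)⟧) ω :=
      fun t ht => Hst {1} (Prod.fst ⁻¹' t) (measurableSet_singleton 1) (measurable_fst ht)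
    have hmul := SPWaux.condExp_mul_of_indep hm' hA hY0m (fun ω => (hYbdd ω).1) H0
    refine EventuallyEq.trans ?_ (hmul.trans (hWcond.mul hμ0c))
    refine condExp_congr_ae (ae_of_all _ fun ω => ?_)
    rw [hWind]
  -- conditional expectation of Y
  have hYcond : P[Y|(sigmaAlg X)] =ᵐ[P]
      fun ω => e (X ω) * μ1 (X ω) + (μ0 (X ω) - e (X ω) * μ0 (X ω)) := by
    have hYsplit : Y = (fun ω => W ω * Y1 ω) + (Y0 - fun ω => W ω * Y0 ω) := by
      funext ω
      show Y ω = W ω * Y1 ω + (Y0 ω - W ω * Y0 ω)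
      rw [hSUTVA ω]; ring
    rw [hYsplit]
    refine (condExp_add int_WY1 (int_Y0.sub int_WY0) _).trans ?_
    refine hWY1.add ?_
    refine (condExp_sub int_Y0 int_WY0 _).trans ?_
    exact hμ0c.sub hWY0
  -- conditional expectation of (W - e(X)) * Y
  have hh : P[fun ω => (W ω - e (X ω)) * Y ω|(sigmaAlg X)] =ᵐ[P]
      fun ω => e (X ω) * μ1 (X ω)
        - e (X ω) * (e (X ω) * μ1 (X ω) + (μ0 (X ω) - e (X ω) * μ0 (X ω))) := by
    have hsplit : (fun ω => (W ω - e (X ω)) * Y ω)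
        = (fun ω => W ω * Y1 ω) - (fun ω => e (X ω) * Y ω) := by
      funext ω
      show (W ω - e (X ω)) * Y ω = W ω * Y1 ω - e (X ω) * Y ω
      rcases hWbin ω with h | h <;> rw [hSUTVA ω, h] <;> ring
    rw [hsplit]
    refine (condExp_sub int_WY1 int_eY _).trans ?_
    refine hWY1.sub ?_
    have hpullE := condExp_stronglyMeasurable_mul_of_bound hm' smeX int_Y 1 heb
    exact hpullE.trans (EventuallyEq.rfl.mul hYcond)
  -- conditional expectations of the three pieces
  have hf1 : P[fun ω => S (X ω, W ω) * (μ1 (X ω) - μ0 (X ω))|(sigmaAlg X)] =ᵐ[P]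
      fun ω => (μ1 (X ω) - μ0 (X ω)) * s (X ω) := by
    have hpull := condExp_stronglyMeasurable_mul_of_bound hm' smτ int_SW (2 * |Cμ|)
      (ae_of_all _ fun ω => by rw [Real.norm_eq_abs]; exact hτb ω)
    refine EventuallyEq.trans ?_ (hpull.trans (EventuallyEq.rfl.mul hs))
    exact condExp_congr_ae (ae_of_all _ fun ω => mul_comm _ _)
  have hf2 : P[fun ω => (s (X ω) / (e (X ω) * (1 - e (X ω)))) * (W ω - e (X ω)) * Y ω|(sigmaAlg X)]
      =ᵐ[P] fun ω => (μ1 (X ω) - μ0 (X ω)) * s (X ω) := by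
    have hpull := condExp_stronglyMeasurable_mul_of_bound hm' smst int_WeY M
      (by filter_upwards [hstb] with ω h; rwa [Real.norm_eq_abs])
    refine EventuallyEq.trans (condExp_congr_ae (ae_of_all _ fun ω => mul_assoc _ _ _)) ?_
    refine hpull.trans ?_
    refine (EventuallyEq.rfl.mul hh).trans ?_
    filter_upwards [hoverlap] with ω h
    obtain ⟨h0, h1⟩ := h
    have hd : e (X ω) * (1 - e (X ω)) ≠ 0 := ne_of_gt (mul_pos h0 (by linarith))
    have hd2 : 1 - e (X ω) ≠ 0 := (by linarith : (0:ℝ) < 1 - e (X ω)).ne'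
    simp only [Pi.mul_apply]
    field_simp
    ring
  -- first conclusion
  constructor
  · have hsplitΨ : P[(fun ω => S (X ω, W ω) * (μ1 (X ω) - μ0 (X ω))
        - (s (X ω) / (e (X ω) * (1 - e (X ω)))) * (W ω - e (X ω)) * Y ω
        + ξ (X ω, W ω))|(sigmaAlg X)]
        = P[((fun ω => S (X ω, W ω) * (μ1 (X ω) - μ0 (X ω)))
            - fun ω => (s (X ω) / (e (X ω) * (1 - e (X ω)))) * (W ω - e (X ω)) * Y ω)
            + fun ω => ξ (X ω, W ω)|(sigmaAlg X)] := rfl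
    rw [hsplitΨ]
    refine (condExp_add (int_f1.sub int_f2) int_ξ _).trans ?_
    refine (((condExp_sub int_f1 int_f2 _).trans (hf1.sub hf2)).add hξ0).trans ?_
    refine Eventually.of_forall fun ω => ?_
    simp
  -- second conclusion
  · refine ⟨(|CS| * (2 * |Cμ|) + M * |CY| + |Cξ|) ^ 2, ?_⟩
    set B := |CS| * (2 * |Cμ|) + M * |CY| + |Cξ| with hBdef
    have hΨm : Measurable (fun ω => S (X ω, W ω) * (μ1 (X ω) - μ0 (X ω))
        - (s (X ω) / (e (X ω) * (1 - e (X ω)))) * (W ω - e (X ω)) * Y ω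
        + ξ (X ω, W ω)) :=
      ((hSW.mul ((hμ1m.comp hX).sub (hμ0m.comp hX))).sub
        ((hstX.mul (hWm.sub heX)).mul hYm)).add hξW
    have hb : ∀ᵐ ω ∂P, |S (X ω, W ω) * (μ1 (X ω) - μ0 (X ω))
        - (s (X ω) / (e (X ω) * (1 - e (X ω)))) * (W ω - e (X ω)) * Y ω
        + ξ (X ω, W ω)| ≤ B := by
      filter_upwards [hstb, hWe] with ω h1 h2
      have e1 : |S (X ω, W ω) * (μ1 (X ω) - μ0 (X ω))| ≤ |CS| * (2 * |Cμ|) := by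
        rw [abs_mul]
        exact mul_le_mul ((hSbdd _).trans (le_abs_self CS)) (hτb ω) (abs_nonneg _)
          (abs_nonneg _)
      have e2 : |(s (X ω) / (e (X ω) * (1 - e (X ω)))) * (W ω - e (X ω)) * Y ω|
          ≤ M * |CY| := by
        rw [abs_mul, abs_mul]
        calc |s (X ω) / (e (X ω) * (1 - e (X ω)))| * |W ω - e (X ω)| * |Y ω|
            ≤ M * 1 * |CY| :=
              mul_le_mul (mul_le_mul h1 h2 (abs_nonneg _) hM.le) (hYb ω) (abs_nonneg _)
                (by positivity)
          _ = M * |CY| := by ring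
      have e3 : |ξ (X ω, W ω)| ≤ |Cξ| := (hξbdd _).trans (le_abs_self Cξ)
      calc |S (X ω, W ω) * (μ1 (X ω) - μ0 (X ω))
          - (s (X ω) / (e (X ω) * (1 - e (X ω)))) * (W ω - e (X ω)) * Y ω
          + ξ (X ω, W ω)|
          = |S (X ω, W ω) * (μ1 (X ω) - μ0 (X ω))
            + (-((s (X ω) / (e (X ω) * (1 - e (X ω)))) * (W ω - e (X ω)) * Y ω))
            + ξ (X ω, W ω)| := by rw [sub_eq_add_neg]
        _ ≤ |S (X ω, W ω) * (μ1 (X ω) - μ0 (X ω))|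
            + |-((s (X ω) / (e (X ω) * (1 - e (X ω)))) * (W ω - e (X ω)) * Y ω)|
            + |ξ (X ω, W ω)| := abs_add_three _ _ _
        _ ≤ B := by rw [abs_neg, hBdef]; exact add_le_add (add_le_add e1 e2) e3
    have hb2 : (fun ω => (S (X ω, W ω) * (μ1 (X ω) - μ0 (X ω))
        - (s (X ω) / (e (X ω) * (1 - e (X ω)))) * (W ω - e (X ω)) * Y ω
        + ξ (X ω, W ω)) ^ 2) ≤ᵐ[P] fun _ => B ^ 2 := by
      filter_upwards [hb] with ω h
      calc (S (X ω, W ω) * (μ1 (X ω) - μ0 (X ω))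
          - (s (X ω) / (e (X ω) * (1 - e (X ω)))) * (W ω - e (X ω)) * Y ω
          + ξ (X ω, W ω)) ^ 2
          = |S (X ω, W ω) * (μ1 (X ω) - μ0 (X ω))
            - (s (X ω) / (e (X ω) * (1 - e (X ω)))) * (W ω - e (X ω)) * Y ω
            + ξ (X ω, W ω)| ^ 2 := (sq_abs _).symm
        _ ≤ B ^ 2 := pow_le_pow_left₀ (abs_nonneg _) h 2
    have int_sq : Integrable (fun ω => (S (X ω, W ω) * (μ1 (X ω) - μ0 (X ω))
        - (s (X ω) / (e (X ω) * (1 - e (X ω)))) * (W ω - e (X ω)) * Y ω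
        + ξ (X ω, W ω)) ^ 2) P := by
      refine SPWaux.integrable_of_bdd (c := B ^ 2) (hΨm.pow_const 2) ?_
      filter_upwards [hb2] with ω h
      rw [abs_of_nonneg (sq_nonneg _)]
      exact h
    have hmono := condExp_mono (μ := P) (m := (sigmaAlg X)) int_sq (integrable_const (B ^ 2)) hb2
    have hcc := condExp_const (μ := P) hm' (B ^ 2)
    filter_upwards [hmono] with ω h
    exact h.trans (le_of_eq (congrFun hcc ω))
end

section
/- Suppose one-sided limited overlap holds: 0 < e(X) < 1 − p* < 1 a.s. for some p* ∈ (0,1). Then the generalized residual Ψ = W·τ(X) − (W−e(X))(Y−μ0(X))/(1−e(X)) satisfies E[Ψ | σ(X)] = 0 a.s. with a.s. finite conditional variance, and it is Neyman orthogonal: for all bounded measurable directions h_e, h_η on 𝒳 such that 1 − e(X) − t·h_e(X) stays bounded away from 0 for all t in a neighborhood of 0, for almost every ω the function t ↦ E[W·τ(X) − (W−e(X)−t·h_e(X))(Y−μ0(X)−t·h_η(X))/(1−e(X)−t·h_e(X)) | σ(X)](ω) has derivative 0 at t = 0. Symmetrically, if 0 < p* < e(X) < 1 a.s., then Ψ =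 (1−W)·τ(X) − (W−e(X))(Y−μ1(X))/e(X) has the same two properties (with perturbations e+t·h_e, μ1+t·h_η). -/
open MeasureTheory ProbabilityTheory Filter Set

section Aux

variable {Ω : Type*} {m : MeasurableSpace Ω} [mΩ : MeasurableSpace Ω] {P : Measure Ω}

lemma aux_int [IsFiniteMeasure P] {f : Ω → ℝ} (hf : AEStronglyMeasurable f P) {C : ℝ}
    (h : ∀ᵐ ω ∂P, |f ω| ≤ C) : Integrable f P :=
  ⟨hf, HasFiniteIntegral.of_bounded (C := C) (by simpa [Real.norm_eq_abs] using h)⟩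

lemma aux_abs_mul_le {x y cx cy : ℝ} (hx : |x| ≤ cx) (hy : |y| ≤ cy) : |x * y| ≤ cx * cy := by
  rw [abs_mul]
  exact mul_le_mul hx hy (abs_nonneg _) ((abs_nonneg _).trans hx)

lemma aux_ae_indepFun [StandardBorelSpace Ω] [IsProbabilityMeasure P] (hm : m ≤ mΩ)
    {W : Ω → ℝ} (hWm : Measurable W) (hWbin : ∀ ω, W ω = 0 ∨ W ω = 1)
    {V : Ω → ℝ × ℝ} (hV : Measurable V)
    (h : CondIndepFun m hm W V P) :
    ∀ᵐ ω ∂P, IndepFun W V (condExpKernel P m ω) := by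
  set κ := condExpKernel P m with hκdef
  have h' : Kernel.IndepFun W V κ (P.trim hm) := h
  set A := W ⁻¹' {1} with hA
  have hAm : MeasurableSet A := hWm (measurableSet_singleton 1)
  have key : ∀ q : ℚ × ℚ, ∀ᵐ ω ∂P,
      κ ω (A ∩ V ⁻¹' (Iic (q.1 : ℝ) ×ˢ Iic (q.2 : ℝ)))
        = κ ω A * κ ω (V ⁻¹' (Iic (q.1 : ℝ) ×ˢ Iic (q.2 : ℝ))) := fun q =>
    ae_of_ae_trim hm (h'.measure_inter_preimage_eq_mul {1} _ (measurableSet_singleton 1)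
      (measurableSet_Iic.prod measurableSet_Iic))
  rw [← ae_all_iff] at key
  filter_upwards [key] with ω hω
  haveI : IsProbabilityMeasure (κ ω) := inferInstance
  set CI : Set (Set ℝ) := Set.range fun q : ℚ => Iic (q : ℝ) with hCI
  have hCIgen : (inferInstance : MeasurableSpace ℝ) = MeasurableSpace.generateFrom CI := by
    rw [BorelSpace.measurable_eq (α := ℝ), Real.borel_eq_generateFrom_Iic_rat, hCI,
      ← iUnion_singleton_eq_range]
  have hCIpi : IsPiSystem CI := by
    rintro _ ⟨q1, rfl⟩ _ ⟨q2, rfl⟩ -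
    exact ⟨q1 ⊓ q2, by rw [Iic_inter_Iic]; norm_cast⟩
  have hCIsp : IsCountablySpanning CI := by
    refine ⟨fun n => Iic ((n : ℚ) : ℝ), fun n => ⟨n, rfl⟩, ?_⟩
    refine eq_univ_of_forall fun x => ?_
    obtain ⟨n, hn⟩ := exists_nat_ge x
    exact mem_iUnion.2 ⟨n, by simpa using hn⟩
  have hgen : (inferInstance : MeasurableSpace (ℝ × ℝ)) =
      MeasurableSpace.generateFrom (image2 (· ×ˢ ·) CI CI) :=
    (generateFrom_eq_prod hCIgen.symm hCIgen.symm hCIsp hCIsp).symm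
  have hpi : IsPiSystem (image2 (· ×ˢ ·) CI CI) := hCIpi.prod hCIpi
  set ν1 : Measure (ℝ × ℝ) := ((κ ω).restrict A).map V with hν1
  set ν2 : Measure (ℝ × ℝ) := κ ω A • ((κ ω).map V) with hν2
  haveI : IsFiniteMeasure ((κ ω).map V) :=
    ⟨by rw [Measure.map_apply hV MeasurableSet.univ]; exact measure_lt_top _ _⟩
  haveI : IsFiniteMeasure ν1 :=
    ⟨by rw [hν1, Measure.map_apply hV MeasurableSet.univ]; exact measure_lt_top _ _⟩
  haveI : IsFiniteMeasure ν2 := by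
    refine ⟨?_⟩
    rw [hν2, Measure.smul_apply, smul_eq_mul]
    exact ENNReal.mul_lt_top (measure_lt_top _ _) (measure_lt_top _ _)
  have hν : ν1 = ν2 := by
    refine ext_of_generate_finite _ hgen hpi ?_ ?_
    · rintro _ ⟨s, ⟨q1, rfl⟩, t, ⟨q2, rfl⟩, rfl⟩
      rw [hν1, hν2, Measure.map_apply hV (measurableSet_Iic.prod measurableSet_Iic),
        Measure.restrict_apply (hV (measurableSet_Iic.prod measurableSet_Iic)),
        Measure.smul_apply, Measure.map_apply hV (measurableSet_Iic.prod measurableSet_Iic),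
        smul_eq_mul, inter_comm]
      exact hω (q1, q2)
    · simp [hν1, hν2, Measure.map_apply hV MeasurableSet.univ,
        Measure.restrict_apply MeasurableSet.univ]
  have hprod : ∀ B : Set (ℝ × ℝ), MeasurableSet B →
      κ ω (V ⁻¹' B ∩ A) = κ ω A * κ ω (V ⁻¹' B) := by
    intro B hB
    have h2 := congrArg (fun μ : Measure (ℝ × ℝ) => μ B) hν
    simpa [hν1, hν2, Measure.map_apply hV hB, Measure.restrict_apply (hV hB),
      Measure.smul_apply, smul_eq_mul] using h2
  rw [indepFun_iff_measure_inter_preimage_eq_mul]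
  intro s t hs ht
  by_cases h1 : (1 : ℝ) ∈ s <;> by_cases h0 : (0 : ℝ) ∈ s
  · have hWs : W ⁻¹' s = univ := eq_univ_of_forall fun ω' => by
      rcases hWbin ω' with hw | hw <;> simp [hw, h0, h1]
    simp [hWs]
  · have hWs : W ⁻¹' s = A := by
      ext ω'; rcases hWbin ω' with hw | hw <;> simp [hA, hw, h0, h1]
    rw [hWs, inter_comm]
    exact hprod t ht
  · have hWs : W ⁻¹' s = Aᶜ := by
      ext ω'; rcases hWbin ω' with hw | hw <;> simp [hA, hw, h0, h1]
    rw [hWs]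
    have hsplit := measure_inter_add_diff (μ := κ ω) (V ⁻¹' t) hAm
    have hfin : κ ω A * κ ω (V ⁻¹' t) ≠ ⊤ :=
      (ENNReal.mul_lt_top (measure_lt_top _ _) (measure_lt_top _ _)).ne
    rw [hprod t ht] at hsplit
    have hdiff : κ ω (V ⁻¹' t \ A) = κ ω (V ⁻¹' t) - κ ω A * κ ω (V ⁻¹' t) :=
      ENNReal.eq_sub_of_add_eq hfin (by rw [add_comm]; exact hsplit)
    rw [inter_comm, ← Set.diff_eq, hdiff, prob_compl_eq_one_sub hAm,
      ENNReal.sub_mul (fun _ _ => measure_ne_top _ _), one_mul]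
  · have hWs : W ⁻¹' s = ∅ := by
      ext ω'; rcases hWbin ω' with hw | hw <;> simp [hw, h0, h1]
    simp [hWs]

lemma aux_condexp_mul [StandardBorelSpace Ω] [IsProbabilityMeasure P] (hm : m ≤ mΩ)
    {W Z : Ω → ℝ} (hWm : Measurable W) (hZm : Measurable Z)
    {CW CZ : ℝ} (hWb : ∀ ω, |W ω| ≤ CW) (hZb : ∀ ω, |Z ω| ≤ CZ)
    (hindep : ∀ᵐ ω ∂P, IndepFun W Z (condExpKernel P m ω)) :
    P[fun ω => W ω * Z ω|m] =ᵐ[P] fun ω => (P[W|m]) ω * (P[Z|m]) ω := by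
  have hWint : Integrable W P := aux_int hWm.aestronglyMeasurable (.of_forall hWb)
  have hZint : Integrable Z P := aux_int hZm.aestronglyMeasurable (.of_forall hZb)
  have hWZint : Integrable (fun ω => W ω * Z ω) P :=
    aux_int (hWm.mul hZm).aestronglyMeasurable
      (.of_forall fun ω => aux_abs_mul_le (hWb ω) (hZb ω))
  have h1 := condExp_ae_eq_integral_condExpKernel hm hWZint
  have h2 := condExp_ae_eq_integral_condExpKernel hm hWint
  have h3 := condExp_ae_eq_integral_condExpKernel hm hZint
  filter_upwards [h1, h2, h3, hindep] with ω e1 e2 e3 hind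
  rw [e1, e2, e3]
  haveI : IsProbabilityMeasure (condExpKernel P m ω) := inferInstance
  exact IndepFun.integral_fun_mul_eq_mul_integral hind
    (aux_int hWm.aestronglyMeasurable (.of_forall hWb)).1
    (aux_int hZm.aestronglyMeasurable (.of_forall hZb)).1

lemma aux_master [IsProbabilityMeasure P] (hm : m ≤ mΩ)
    {U V R c1 c2 c3 c4 : Ω → ℝ}
    (hU : Integrable U P) (hV : Integrable V P) (hR : Integrable R P)
    (hUb : ∃ C, ∀ᵐ ω ∂P, |U ω| ≤ C) (hVb : ∃ C, ∀ᵐ ω ∂P, |V ω| ≤ C)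
    (hRb : ∃ C, ∀ᵐ ω ∂P, |R ω| ≤ C)
    (hc1 : StronglyMeasurable[m] c1) (hc2 : StronglyMeasurable[m] c2)
    (hc3 : StronglyMeasurable[m] c3) (hc4 : StronglyMeasurable[m] c4)
    (hb1 : ∃ C, ∀ᵐ ω ∂P, |c1 ω| ≤ C) (hb2 : ∃ C, ∀ᵐ ω ∂P, |c2 ω| ≤ C)
    (hb3 : ∃ C, ∀ᵐ ω ∂P, |c3 ω| ≤ C) (hb4 : ∃ C, ∀ᵐ ω ∂P, |c4 ω| ≤ C) :
    P[fun ω => c1 ω * U ω + c2 ω * V ω + c3 ω * R ω + c4 ω|m] =ᵐ[P]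
      fun ω => c1 ω * (P[U|m]) ω + c2 ω * (P[V|m]) ω + c3 ω * (P[R|m]) ω + c4 ω := by
  obtain ⟨CU, hCU⟩ := hUb; obtain ⟨CV, hCV⟩ := hVb; obtain ⟨CR, hCR⟩ := hRb
  obtain ⟨C1, hC1⟩ := hb1; obtain ⟨C2, hC2⟩ := hb2
  obtain ⟨C3, hC3⟩ := hb3; obtain ⟨C4, hC4⟩ := hb4
  have hint1 : Integrable (fun ω => c1 ω * U ω) P :=
    aux_int (((hc1.mono hm).aestronglyMeasurable).mul hU.1)
      (by filter_upwards [hC1, hCU] with ω a b using aux_abs_mul_le a b)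
  have hint2 : Integrable (fun ω => c2 ω * V ω) P :=
    aux_int (((hc2.mono hm).aestronglyMeasurable).mul hV.1)
      (by filter_upwards [hC2, hCV] with ω a b using aux_abs_mul_le a b)
  have hint3 : Integrable (fun ω => c3 ω * R ω) P :=
    aux_int (((hc3.mono hm).aestronglyMeasurable).mul hR.1)
      (by filter_upwards [hC3, hCR] with ω a b using aux_abs_mul_le a b)
  have hint4 : Integrable c4 P := aux_int (hc4.mono hm).aestronglyMeasurable hC4
  have e1 : P[(fun ω => c1 ω * U ω)|m] =ᵐ[P] fun ω => c1 ω * (P[U|m]) ω :=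
    condExp_mul_of_stronglyMeasurable_left hc1 hint1 hU
  have e2 : P[(fun ω => c2 ω * V ω)|m] =ᵐ[P] fun ω => c2 ω * (P[V|m]) ω :=
    condExp_mul_of_stronglyMeasurable_left hc2 hint2 hV
  have e3 : P[(fun ω => c3 ω * R ω)|m] =ᵐ[P] fun ω => c3 ω * (P[R|m]) ω :=
    condExp_mul_of_stronglyMeasurable_left hc3 hint3 hR
  have e4 : P[c4|m] = c4 := condExp_of_stronglyMeasurable hm hc4 hint4
  have E1 : P[fun ω => (c1 ω * U ω + c2 ω * V ω + c3 ω * R ω) + c4 ω|m] =ᵐ[P]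
      P[fun ω => c1 ω * U ω + c2 ω * V ω + c3 ω * R ω|m] + P[c4|m] :=
    condExp_add ((hint1.add hint2).add hint3) hint4 m
  have E2 : P[fun ω => (c1 ω * U ω + c2 ω * V ω) + c3 ω * R ω|m] =ᵐ[P]
      P[fun ω => c1 ω * U ω + c2 ω * V ω|m] + P[fun ω => c3 ω * R ω|m] :=
    condExp_add (hint1.add hint2) hint3 m
  have E3 : P[fun ω => c1 ω * U ω + c2 ω * V ω|m] =ᵐ[P]
      P[fun ω => c1 ω * U ω|m] + P[fun ω => c2 ω * V ω|m] :=
    condExp_add hint1 hint2 m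
  refine E1.trans ?_
  rw [e4]
  filter_upwards [E2, E3, e1, e2, e3] with ω g2 g3 f1 f2 f3
  simp only [Pi.add_apply] at *
  rw [g2, g3, f1, f2, f3]

end Aux
theorem stmt_4
    {Ω 𝒳 : Type*} [MeasurableSpace Ω] [StandardBorelSpace Ω] [MeasurableSpace 𝒳]
    (P : Measure Ω) [IsProbabilityMeasure P]
    (X : Ω → 𝒳) (hX : Measurable X)
    (W : Ω → ℝ) (hWm : Measurable W) (hWbin : ∀ ω, W ω = 0 ∨ W ω = 1)
    (Y0 Y1 : Ω → ℝ) (hY0m : Measurable Y0) (hY1m : Measurable Y1)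
    (CY : ℝ) (hYbdd : ∀ ω, |Y0 ω| ≤ CY ∧ |Y1 ω| ≤ CY)
    (Y : Ω → ℝ) (hSUTVA : ∀ ω, Y ω = W ω * Y1 ω + (1 - W ω) * Y0 ω)
    (hUnconf : CondIndepFun (sigmaAlg X) hX.comap_le W (fun ω => (Y0 ω, Y1 ω)) P)
    (e : 𝒳 → ℝ) (hem : Measurable e)
    (hprop : P[W|sigmaAlg X] =ᵐ[P] (fun ω => e (X ω)))
    (hoverlap : ∀ᵐ ω ∂P, 0 < e (X ω) ∧ e (X ω) < 1)
    (μ0 μ1 : 𝒳 → ℝ) (hμ0m : Measurable μ0) (hμ1m : Measurable μ1)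
    (Cμ : ℝ) (hμbdd : ∀ x, |μ0 x| ≤ Cμ ∧ |μ1 x| ≤ Cμ)
    (hμ0c : P[Y0|sigmaAlg X] =ᵐ[P] (fun ω => μ0 (X ω)))
    (hμ1c : P[Y1|sigmaAlg X] =ᵐ[P] (fun ω => μ1 (X ω))) :
    (∀ pstar : ℝ, pstar ∈ Set.Ioo (0:ℝ) 1 → (∀ᵐ ω ∂P, e (X ω) < 1 - pstar) →
      (P[(fun ω => W ω * (μ1 (X ω) - μ0 (X ω)) - (W ω - e (X ω)) * (Y ω - μ0 (X ω)) / (1 - e (X ω)))|sigmaAlg X] =ᵐ[P] 0 ∧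
       (∃ C : ℝ, ∀ᵐ ω ∂P,
          (P[(fun ω' => (W ω' * (μ1 (X ω') - μ0 (X ω')) - (W ω' - e (X ω')) * (Y ω' - μ0 (X ω')) / (1 - e (X ω'))) ^ 2)|sigmaAlg X]) ω ≤ C) ∧
       (∀ he hη : 𝒳 → ℝ, Measurable he → Measurable hη →
          (∃ C : ℝ, ∀ x, |he x| ≤ C) → (∃ C : ℝ, ∀ x, |hη x| ≤ C) →
          (∃ δ > (0:ℝ), ∃ c > (0:ℝ), ∀ t : ℝ, |t| < δ →
            ∀ᵐ ω ∂P, c ≤ 1 - e (X ω) - t * he (X ω)) →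
          ∃ g : ℝ → Ω → ℝ,
            (∀ t : ℝ, g t =ᵐ[P] P[(fun ω => W ω * (μ1 (X ω) - μ0 (X ω)) - (W ω - (e (X ω) + t * he (X ω))) * (Y ω - (μ0 (X ω) + t * hη (X ω))) / (1 - (e (X ω) + t * he (X ω))))|sigmaAlg X]) ∧
            (∀ᵐ ω ∂P, HasDerivAt (fun t => g t ω) 0 0)))) ∧
    (∀ pstar : ℝ, pstar ∈ Set.Ioo (0:ℝ) 1 → (∀ᵐ ω ∂P, pstar < e (X ω)) →
      (P[(fun ω => (1 - W ω) * (μ1 (X ω) - μ0 (X ω)) - (W ω - e (X ω)) * (Y ω - μ1 (X ω)) / e (X ω))|sigmaAlg X] =ᵐ[P] 0 ∧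
       (∃ C : ℝ, ∀ᵐ ω ∂P,
          (P[(fun ω' => ((1 - W ω') * (μ1 (X ω') - μ0 (X ω')) - (W ω' - e (X ω')) * (Y ω' - μ1 (X ω')) / e (X ω')) ^ 2)|sigmaAlg X]) ω ≤ C) ∧
       (∀ he hη : 𝒳 → ℝ, Measurable he → Measurable hη →
          (∃ C : ℝ, ∀ x, |he x| ≤ C) → (∃ C : ℝ, ∀ x, |hη x| ≤ C) →
          (∃ δ > (0:ℝ), ∃ c > (0:ℝ), ∀ t : ℝ, |t| < δ →
            ∀ᵐ ω ∂P, c ≤ e (X ω) + t * he (X ω)) →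
          ∃ g : ℝ → Ω → ℝ,
            (∀ t : ℝ, g t =ᵐ[P] P[(fun ω => (1 - W ω) * (μ1 (X ω) - μ0 (X ω)) - (W ω - (e (X ω) + t * he (X ω))) * (Y ω - (μ1 (X ω) + t * hη (X ω))) / (e (X ω) + t * he (X ω)))|sigmaAlg X]) ∧
            (∀ᵐ ω ∂P, HasDerivAt (fun t => g t ω) 0 0)))) := by
  classical
  haveI : Nonempty Ω := by
    by_contra hne
    rw [not_nonempty_iff] at hne
    have h1 := measure_univ (μ := P)
    rw [Measure.eq_zero_of_isEmpty P] at h1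
    simp at h1
  have hm : sigmaAlg X ≤ ‹MeasurableSpace Ω› := hX.comap_le
  have hmX : Measurable[sigmaAlg X] X := fun s hs => ⟨s, hs, rfl⟩
  have hWb : ∀ ω, |W ω| ≤ 1 := by
    intro ω; rcases hWbin ω with h | h <;> rw [h] <;> norm_num
  have hYm : Measurable Y := by
    rw [funext hSUTVA]
    exact (hWm.mul hY1m).add ((measurable_const.sub hWm).mul hY0m)
  have hCY : 0 ≤ CY := le_trans (abs_nonneg _) ((hYbdd (Classical.arbitrary Ω)).1)
  have hCμ : 0 ≤ Cμ := le_trans (abs_nonneg _) ((hμbdd (X (Classical.arbitrary Ω))).1)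
  have hYb : ∀ ω, |Y ω| ≤ CY := by
    intro ω
    rcases hWbin ω with h | h <;> rw [hSUTVA ω, h]
    · simpa using (hYbdd ω).1
    · simpa using (hYbdd ω).2
  have hτb : ∀ x, |μ1 x - μ0 x| ≤ Cμ + Cμ :=
    fun x => (abs_sub _ _).trans (add_le_add (hμbdd x).2 (hμbdd x).1)
  have hVm : Measurable fun ω => (Y0 ω, Y1 ω) := hY0m.prodMk hY1m
  have hind := aux_ae_indepFun hm hWm hWbin hVm hUnconf
  have hindY1 : ∀ᵐ ω ∂P, IndepFun W Y1 (condExpKernel P (sigmaAlg X) ω) := by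
    filter_upwards [hind] with ω h using h.comp measurable_id measurable_snd
  have hindY0 : ∀ᵐ ω ∂P, IndepFun W Y0 (condExpKernel P (sigmaAlg X) ω) := by
    filter_upwards [hind] with ω h using h.comp measurable_id measurable_fst
  have hWY1 : P[(fun ω => W ω * Y1 ω)|sigmaAlg X] =ᵐ[P] fun ω => e (X ω) * μ1 (X ω) := by
    refine (aux_condexp_mul hm hWm hY1m hWb (fun ω => (hYbdd ω).2) hindY1).trans ?_
    filter_upwards [hprop, hμ1c] with ω a b
    rw [a, b]
  have hWY0 : P[(fun ω => W ω * Y0 ω)|sigmaAlg X] =ᵐ[P] fun ω => e (X ω) * μ0 (X ω) := by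
    refine (aux_condexp_mul hm hWm hY0m hWb (fun ω => (hYbdd ω).1) hindY0).trans ?_
    filter_upwards [hprop, hμ0c] with ω a b
    rw [a, b]
  have hWint : Integrable W P := aux_int hWm.aestronglyMeasurable (.of_forall hWb)
  have hYint : Integrable Y P := aux_int hYm.aestronglyMeasurable (.of_forall hYb)
  have hY0int : Integrable Y0 P :=
    aux_int hY0m.aestronglyMeasurable (.of_forall fun ω => (hYbdd ω).1)
  have hWY1int : Integrable (fun ω => W ω * Y1 ω) P :=
    aux_int (hWm.mul hY1m).aestronglyMeasurable
      (.of_forall fun ω => aux_abs_mul_le (hWb ω) ((hYbdd ω).2))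
  have hWY0int : Integrable (fun ω => W ω * Y0 ω) P :=
    aux_int (hWm.mul hY0m).aestronglyMeasurable
      (.of_forall fun ω => aux_abs_mul_le (hWb ω) ((hYbdd ω).1))
  have hYc : P[Y|sigmaAlg X] =ᵐ[P]
      fun ω => e (X ω) * μ1 (X ω) + (1 - e (X ω)) * μ0 (X ω) := by
    have hrew : Y = (fun ω => W ω * Y1 ω) + (Y0 - fun ω => W ω * Y0 ω) :=
      funext fun ω => by
        simp only [Pi.add_apply, Pi.sub_apply]
        rw [hSUTVA ω]; ring
    calc P[Y|sigmaAlg X]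
        = P[(fun ω => W ω * Y1 ω) + (Y0 - fun ω => W ω * Y0 ω)|sigmaAlg X] := by rw [hrew]
      _ =ᵐ[P] P[(fun ω => W ω * Y1 ω)|sigmaAlg X]
            + P[(Y0 - fun ω => W ω * Y0 ω)|sigmaAlg X] :=
          condExp_add hWY1int (hY0int.sub hWY0int) (sigmaAlg X)
      _ =ᵐ[P] fun ω => e (X ω) * μ1 (X ω) + (1 - e (X ω)) * μ0 (X ω) := by
          have hsub := condExp_sub hY0int hWY0int (m := sigmaAlg X)
          filter_upwards [hWY1, hμ0c, hWY0, hsub] with ω a b c d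
          show (P[(fun ω => W ω * Y1 ω)|sigmaAlg X]) ω
              + (P[(Y0 - fun ω => W ω * Y0 ω)|sigmaAlg X]) ω = _
          rw [a, d, Pi.sub_apply, b, c]; ring
  have main : ∀ (k0 k1 : ℝ) (a b q : 𝒳 → ℝ), Measurable a → Measurable b → Measurable q →
      (∃ C, ∀ᵐ ω ∂P, |a (X ω)| ≤ C) → (∃ C, ∀ x, |b x| ≤ C) →
      (∃ C, ∀ᵐ ω ∂P, |q (X ω)| ≤ C) →
      P[(fun ω => k0 * (μ1 (X ω) - μ0 (X ω)) + k1 * (W ω * (μ1 (X ω) - μ0 (X ω)))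
          - (W ω - a (X ω)) * (Y ω - b (X ω)) * q (X ω))|sigmaAlg X] =ᵐ[P]
        fun ω => (k1 * (μ1 (X ω) - μ0 (X ω)) + q (X ω) * b (X ω)) * e (X ω)
          + (q (X ω) * a (X ω)) * (e (X ω) * μ1 (X ω) + (1 - e (X ω)) * μ0 (X ω))
          + (-(q (X ω))) * (e (X ω) * μ1 (X ω))
          + (k0 * (μ1 (X ω) - μ0 (X ω)) - q (X ω) * a (X ω) * b (X ω)) := by
    rintro k0 k1 a b q ham hbm hqm ⟨Ca, hCa⟩ ⟨Cb, hCb⟩ ⟨Cq, hCq⟩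
    have hptw : ∀ ω, (k0 * (μ1 (X ω) - μ0 (X ω)) + k1 * (W ω * (μ1 (X ω) - μ0 (X ω)))
        - (W ω - a (X ω)) * (Y ω - b (X ω)) * q (X ω))
        = (k1 * (μ1 (X ω) - μ0 (X ω)) + q (X ω) * b (X ω)) * W ω
          + (q (X ω) * a (X ω)) * Y ω
          + (-(q (X ω))) * (W ω * Y1 ω)
          + (k0 * (μ1 (X ω) - μ0 (X ω)) - q (X ω) * a (X ω) * b (X ω)) := by
      intro ω
      rcases hWbin ω with h | h <;> rw [hSUTVA ω, h] <;> ring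
    refine (condExp_congr_ae (.of_forall hptw)).trans ?_
    have hmas := aux_master hm hWint hYint hWY1int
      ⟨1, .of_forall hWb⟩ ⟨CY, .of_forall hYb⟩
      ⟨CY, .of_forall fun ω => aux_abs_mul_le (hWb ω) ((hYbdd ω).2) |>.trans_eq (one_mul CY)⟩
      (c1 := fun ω => k1 * (μ1 (X ω) - μ0 (X ω)) + q (X ω) * b (X ω))
      (c2 := fun ω => q (X ω) * a (X ω))
      (c3 := fun ω => -(q (X ω)))
      (c4 := fun ω => k0 * (μ1 (X ω) - μ0 (X ω)) - q (X ω) * a (X ω) * b (X ω))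
      (((measurable_const.mul ((hμ1m.sub hμ0m).comp hmX)).add
        ((hqm.comp hmX).mul (hbm.comp hmX))).stronglyMeasurable)
      (((hqm.comp hmX).mul (ham.comp hmX)).stronglyMeasurable)
      ((hqm.comp hmX).neg.stronglyMeasurable)
      (((measurable_const.mul ((hμ1m.sub hμ0m).comp hmX)).sub
        (((hqm.comp hmX).mul (ham.comp hmX)).mul (hbm.comp hmX))).stronglyMeasurable)
      ⟨|k1| * (Cμ + Cμ) + Cq * Cb, by
        filter_upwards [hCq] with ω hq
        refine (abs_add_le _ _).trans (add_le_add ?_ (aux_abs_mul_le hq (hCb _)))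
        rw [abs_mul]
        exact mul_le_mul_of_nonneg_left (hτb _) (abs_nonneg _)⟩
      ⟨Cq * Ca, by
        filter_upwards [hCq, hCa] with ω hq ha using aux_abs_mul_le hq ha⟩
      ⟨Cq, by filter_upwards [hCq] with ω hq using (abs_neg _).le.trans hq⟩
      ⟨|k0| * (Cμ + Cμ) + Cq * Ca * Cb, by
        filter_upwards [hCq, hCa] with ω hq ha
        refine (abs_sub _ _).trans (add_le_add ?_
          (aux_abs_mul_le (aux_abs_mul_le hq ha) (hCb _)))
        rw [abs_mul]
        exact mul_le_mul_of_nonneg_left (hτb _) (abs_nonneg _)⟩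
    refine hmas.trans ?_
    filter_upwards [hprop, hYc, hWY1] with ω h1 h2 h3
    rw [h1, h2, h3]
  constructor
  · intro pstar hpst hov1
    have hps0 : 0 < pstar := hpst.1
    have hps1 : pstar < 1 := hpst.2
    refine ⟨?_, ?_, ?_⟩
    · have h := main 0 1 e μ0 (fun x => (1 - e x)⁻¹) hem hμ0m
        (measurable_const.sub hem).inv
        ⟨1, by
          filter_upwards [hoverlap] with ω hω
          rw [abs_of_pos hω.1]; linarith [hω.2]⟩
        ⟨Cμ, fun x => (hμbdd x).1⟩
        ⟨pstar⁻¹, by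
          filter_upwards [hoverlap, hov1] with ω hω h1
          have hpos : 0 < 1 - e (X ω) := by linarith [hω.2]
          rw [abs_of_pos (inv_pos.2 hpos)]
          exact inv_anti₀ hps0 (by linarith)⟩
      refine (condExp_congr_ae (.of_forall fun ω => ?_)).trans (h.trans ?_)
      · simp only [div_eq_mul_inv]; ring
      · filter_upwards [hoverlap] with ω hω
        have hne : 1 - e (X ω) ≠ 0 := by linarith [hω.2]
        show _ = (0 : Ω → ℝ) ω
        simp only [Pi.zero_apply]
        field_simp
        ring
    · set F : Ω → ℝ := fun ω => W ω * (μ1 (X ω) - μ0 (X ω))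
        - (W ω - e (X ω)) * (Y ω - μ0 (X ω)) / (1 - e (X ω)) with hF
      set B : ℝ := Cμ + Cμ + (CY + Cμ) / pstar with hB
      have hFm : Measurable F :=
        (hWm.mul ((hμ1m.comp hX).sub (hμ0m.comp hX))).sub
          (((hWm.sub (hem.comp hX)).mul (hYm.sub (hμ0m.comp hX))).div
            (measurable_const.sub (hem.comp hX)))
      have hFb : ∀ᵐ ω ∂P, |F ω| ≤ B := by
        filter_upwards [hoverlap, hov1] with ω hω h1
        have hpos : 0 < 1 - e (X ω) := by linarith [hω.2]
        have h2 : |W ω - e (X ω)| ≤ 1 := by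
          rcases hWbin ω with h | h
          · rw [h, zero_sub, abs_neg, abs_of_pos hω.1]; linarith [hω.2]
          · rw [h, abs_of_pos hpos]; linarith [hω.1]
        have h3 : |Y ω - μ0 (X ω)| ≤ CY + Cμ :=
          (abs_sub _ _).trans (add_le_add (hYb ω) (hμbdd _).1)
        have h4 : |(W ω - e (X ω)) * (Y ω - μ0 (X ω))| ≤ CY + Cμ := by
          have := aux_abs_mul_le h2 h3; rwa [one_mul] at this
        have h5 : |(W ω - e (X ω)) * (Y ω - μ0 (X ω)) / (1 - e (X ω))| ≤ (CY + Cμ) / pstar := by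
          rw [abs_div, abs_of_pos hpos]
          exact div_le_div₀ (by linarith) h4 hps0 (by linarith)
        have h6 : |W ω * (μ1 (X ω) - μ0 (X ω))| ≤ Cμ + Cμ := by
          have := aux_abs_mul_le (hWb ω) (hτb (X ω)); rwa [one_mul] at this
        calc |F ω| ≤ |W ω * (μ1 (X ω) - μ0 (X ω))|
            + |(W ω - e (X ω)) * (Y ω - μ0 (X ω)) / (1 - e (X ω))| := abs_sub _ _
          _ ≤ B := by rw [hB]; linarith
      have hF2int : Integrable (fun ω => F ω ^ 2) P :=
        aux_int (hFm.pow_const 2).aestronglyMeasurable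
          (by
            filter_upwards [hFb] with ω hω
            rw [abs_of_nonneg (sq_nonneg _), ← sq_abs]
            exact pow_le_pow_left₀ (abs_nonneg _) hω 2)
      have hle : (fun ω => F ω ^ 2) ≤ᵐ[P] fun _ => B ^ 2 := by
        filter_upwards [hFb] with ω hω
        calc F ω ^ 2 = |F ω| ^ 2 := (sq_abs _).symm
          _ ≤ B ^ 2 := pow_le_pow_left₀ (abs_nonneg _) hω 2
      have hmono := condExp_mono (m := sigmaAlg X) hF2int (integrable_const (B ^ 2)) hle
      refine ⟨B ^ 2, ?_⟩
      filter_upwards [hmono] with ω hω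
      exact hω.trans_eq (by rw [condExp_const hm])
    · rintro he' hη' hem' hηm' ⟨Che, hChe⟩ ⟨Chη, hChη⟩ ⟨δ, hδ, c, hc, hbd⟩
      refine ⟨fun t ω => if |t| < δ then
          -(t * he' (X ω)) * (t * hη' (X ω)) / (1 - e (X ω) - t * he' (X ω))
        else (P[(fun ω => W ω * (μ1 (X ω) - μ0 (X ω))
          - (W ω - (e (X ω) + t * he' (X ω))) * (Y ω - (μ0 (X ω) + t * hη' (X ω)))
            / (1 - (e (X ω) + t * he' (X ω))))|sigmaAlg X]) ω, fun t => ?_, ?_⟩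
      · by_cases h : |t| < δ
        · simp only [if_pos h]
          have hmn := main 0 1 (fun x => e x + t * he' x) (fun x => μ0 x + t * hη' x)
            (fun x => (1 - (e x + t * he' x))⁻¹)
            (hem.add (measurable_const.mul hem')) (hμ0m.add (measurable_const.mul hηm'))
            (measurable_const.sub (hem.add (measurable_const.mul hem'))).inv
            ⟨1 + |t| * Che, by
              filter_upwards [hoverlap] with ω hω
              refine (abs_add_le _ _).trans (add_le_add ?_ ?_)
              · rw [abs_of_pos hω.1]; linarith [hω.2]
              · rw [abs_mul]
                exact mul_le_mul_of_nonneg_left (hChe _) (abs_nonneg _)⟩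
            ⟨Cμ + |t| * Chη, fun x => (abs_add_le _ _).trans (add_le_add (hμbdd x).1
              (by rw [abs_mul]; exact mul_le_mul_of_nonneg_left (hChη _) (abs_nonneg _)))⟩
            ⟨c⁻¹, by
              filter_upwards [hbd t h] with ω hω
              have hpos : 0 < 1 - (e (X ω) + t * he' (X ω)) := by linarith
              rw [abs_of_pos (inv_pos.2 hpos)]
              exact inv_anti₀ hc (by linarith)⟩
          refine EventuallyEq.symm ((condExp_congr_ae (.of_forall fun ω => ?_)).trans
            (hmn.trans ?_))
          · simp only [div_eq_mul_inv]; ring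
          · filter_upwards [hbd t h] with ω hω
            have hpos : 0 < 1 - (e (X ω) + t * he' (X ω)) := by linarith
            have hpos2 : 0 < 1 - e (X ω) - t * he' (X ω) := by linarith
            have hne : 1 - (e (X ω) + t * he' (X ω)) ≠ 0 := ne_of_gt hpos
            have hne2 : 1 - e (X ω) - t * he' (X ω) ≠ 0 := ne_of_gt hpos2
            field_simp
            ring
        · simp only [if_neg h]
          exact EventuallyEq.rfl
      · filter_upwards [hoverlap] with ω hω
        have hev : (fun t => if |t| < δ then
            -(t * he' (X ω)) * (t * hη' (X ω)) / (1 - e (X ω) - t * he' (X ω))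
          else (P[(fun ω => W ω * (μ1 (X ω) - μ0 (X ω))
            - (W ω - (e (X ω) + t * he' (X ω))) * (Y ω - (μ0 (X ω) + t * hη' (X ω)))
              / (1 - (e (X ω) + t * he' (X ω))))|sigmaAlg X]) ω)
            =ᶠ[nhds 0] fun t =>
              -(t * he' (X ω)) * (t * hη' (X ω)) / (1 - e (X ω) - t * he' (X ω)) := by
          have hball : ∀ᶠ t : ℝ in nhds 0, |t| < δ := by
            have := Metric.ball_mem_nhds (0 : ℝ) hδ
            filter_upwards [this] with t ht
            simpa [Real.dist_eq] using ht
          filter_upwards [hball] with t ht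
          rw [if_pos ht]
        have ha : HasDerivAt (fun t : ℝ => t * he' (X ω)) (he' (X ω)) 0 := by
          simpa using (hasDerivAt_id (0 : ℝ)).mul_const (he' (X ω))
        have hb : HasDerivAt (fun t : ℝ => t * hη' (X ω)) (hη' (X ω)) 0 := by
          simpa using (hasDerivAt_id (0 : ℝ)).mul_const (hη' (X ω))
        have Hn : HasDerivAt (fun t : ℝ => -(t * he' (X ω)) * (t * hη' (X ω))) 0 0 := by
          exact (ha.neg.mul hb).congr_deriv (by simp)
        have Hm : HasDerivAt (fun t : ℝ => 1 - e (X ω) - t * he' (X ω)) (-(he' (X ω))) 0 :=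
          ha.const_sub (1 - e (X ω))
        have hd : 1 - e (X ω) - (0 : ℝ) * he' (X ω) ≠ 0 := by
          simp only [zero_mul, sub_zero]
          linarith [hω.2]
        have H := Hn.div Hm hd
        refine HasDerivAt.congr_of_eventuallyEq ?_ hev
        exact H.congr_deriv (by simp)
  · intro pstar hpst hov2
    have hps0 : 0 < pstar := hpst.1
    have hps1 : pstar < 1 := hpst.2
    refine ⟨?_, ?_, ?_⟩
    · have h := main 1 (-1) e μ1 (fun x => (e x)⁻¹) hem hμ1m hem.inv
        ⟨1, by
          filter_upwards [hoverlap] with ω hω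
          rw [abs_of_pos hω.1]; linarith [hω.2]⟩
        ⟨Cμ, fun x => (hμbdd x).2⟩
        ⟨pstar⁻¹, by
          filter_upwards [hoverlap, hov2] with ω hω h1
          rw [abs_of_pos (inv_pos.2 hω.1)]
          exact inv_anti₀ hps0 (by linarith)⟩
      refine (condExp_congr_ae (.of_forall fun ω => ?_)).trans (h.trans ?_)
      · simp only [div_eq_mul_inv]; ring
      · filter_upwards [hoverlap] with ω hω
        have hne : e (X ω) ≠ 0 := ne_of_gt hω.1
        show _ = (0 : Ω → ℝ) ω
        simp only [Pi.zero_apply]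
        field_simp
        ring
    · set F : Ω → ℝ := fun ω => (1 - W ω) * (μ1 (X ω) - μ0 (X ω))
        - (W ω - e (X ω)) * (Y ω - μ1 (X ω)) / e (X ω) with hF
      set B : ℝ := Cμ + Cμ + (CY + Cμ) / pstar with hB
      have hFm : Measurable F :=
        ((measurable_const.sub hWm).mul ((hμ1m.comp hX).sub (hμ0m.comp hX))).sub
          (((hWm.sub (hem.comp hX)).mul (hYm.sub (hμ1m.comp hX))).div (hem.comp hX))
      have hFb : ∀ᵐ ω ∂P, |F ω| ≤ B := by
        filter_upwards [hoverlap, hov2] with ω hω h1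
        have h2 : |W ω - e (X ω)| ≤ 1 := by
          rcases hWbin ω with h | h
          · rw [h, zero_sub, abs_neg, abs_of_pos hω.1]; linarith [hω.2]
          · rw [h, abs_of_pos (by linarith [hω.2] : (0:ℝ) < 1 - e (X ω))]; linarith [hω.1]
        have h1W : |1 - W ω| ≤ 1 := by
          rcases hWbin ω with h | h <;> rw [h] <;> norm_num
        have h3 : |Y ω - μ1 (X ω)| ≤ CY + Cμ :=
          (abs_sub _ _).trans (add_le_add (hYb ω) (hμbdd _).2)
        have h4 : |(W ω - e (X ω)) * (Y ω - μ1 (X ω))| ≤ CY + Cμ := by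
          have := aux_abs_mul_le h2 h3; rwa [one_mul] at this
        have h5 : |(W ω - e (X ω)) * (Y ω - μ1 (X ω)) / e (X ω)| ≤ (CY + Cμ) / pstar := by
          rw [abs_div, abs_of_pos hω.1]
          exact div_le_div₀ (by linarith) h4 hps0 (by linarith)
        have h6 : |(1 - W ω) * (μ1 (X ω) - μ0 (X ω))| ≤ Cμ + Cμ := by
          have := aux_abs_mul_le h1W (hτb (X ω)); rwa [one_mul] at this
        calc |F ω| ≤ |(1 - W ω) * (μ1 (X ω) - μ0 (X ω))|
            + |(W ω - e (X ω)) * (Y ω - μ1 (X ω)) / e (X ω)| := abs_sub _ _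
          _ ≤ B := by rw [hB]; linarith
      have hF2int : Integrable (fun ω => F ω ^ 2) P :=
        aux_int (hFm.pow_const 2).aestronglyMeasurable
          (by
            filter_upwards [hFb] with ω hω
            rw [abs_of_nonneg (sq_nonneg _), ← sq_abs]
            exact pow_le_pow_left₀ (abs_nonneg _) hω 2)
      have hle : (fun ω => F ω ^ 2) ≤ᵐ[P] fun _ => B ^ 2 := by
        filter_upwards [hFb] with ω hω
        calc F ω ^ 2 = |F ω| ^ 2 := (sq_abs _).symm
          _ ≤ B ^ 2 := pow_le_pow_left₀ (abs_nonneg _) hω 2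
      have hmono := condExp_mono (m := sigmaAlg X) hF2int (integrable_const (B ^ 2)) hle
      refine ⟨B ^ 2, ?_⟩
      filter_upwards [hmono] with ω hω
      exact hω.trans_eq (by rw [condExp_const hm])
    · rintro he' hη' hem' hηm' ⟨Che, hChe⟩ ⟨Chη, hChη⟩ ⟨δ, hδ, c, hc, hbd⟩
      refine ⟨fun t ω => if |t| < δ then
          -(t * he' (X ω)) * (t * hη' (X ω)) / (e (X ω) + t * he' (X ω))
        else (P[(fun ω => (1 - W ω) * (μ1 (X ω) - μ0 (X ω))
          - (W ω - (e (X ω) + t * he' (X ω))) * (Y ω - (μ1 (X ω) + t * hη' (X ω)))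
            / (e (X ω) + t * he' (X ω)))|sigmaAlg X]) ω, fun t => ?_, ?_⟩
      · by_cases h : |t| < δ
        · simp only [if_pos h]
          have hmn := main 1 (-1) (fun x => e x + t * he' x) (fun x => μ1 x + t * hη' x)
            (fun x => (e x + t * he' x)⁻¹)
            (hem.add (measurable_const.mul hem')) (hμ1m.add (measurable_const.mul hηm'))
            (hem.add (measurable_const.mul hem')).inv
            ⟨1 + |t| * Che, by
              filter_upwards [hoverlap] with ω hω
              refine (abs_add_le _ _).trans (add_le_add ?_ ?_)
              · rw [abs_of_pos hω.1]; linarith [hω.2]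
              · rw [abs_mul]
                exact mul_le_mul_of_nonneg_left (hChe _) (abs_nonneg _)⟩
            ⟨Cμ + |t| * Chη, fun x => (abs_add_le _ _).trans (add_le_add (hμbdd x).2
              (by rw [abs_mul]; exact mul_le_mul_of_nonneg_left (hChη _) (abs_nonneg _)))⟩
            ⟨c⁻¹, by
              filter_upwards [hbd t h] with ω hω
              have hpos : 0 < e (X ω) + t * he' (X ω) := by linarith
              rw [abs_of_pos (inv_pos.2 hpos)]
              exact inv_anti₀ hc (by linarith)⟩
          refine EventuallyEq.symm ((condExp_congr_ae (.of_forall fun ω => ?_)).trans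
            (hmn.trans ?_))
          · simp only [div_eq_mul_inv]; ring
          · filter_upwards [hbd t h] with ω hω
            have hpos : 0 < e (X ω) + t * he' (X ω) := by linarith
            have hne : e (X ω) + t * he' (X ω) ≠ 0 := ne_of_gt hpos
            field_simp
            ring
        · simp only [if_neg h]
          exact EventuallyEq.rfl
      · filter_upwards [hoverlap] with ω hω
        have hev : (fun t => if |t| < δ then
            -(t * he' (X ω)) * (t * hη' (X ω)) / (e (X ω) + t * he' (X ω))
          else (P[(fun ω => (1 - W ω) * (μ1 (X ω) - μ0 (X ω))
            - (W ω - (e (X ω) + t * he' (X ω))) * (Y ω - (μ1 (X ω) + t * hη' (X ω)))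
              / (e (X ω) + t * he' (X ω)))|sigmaAlg X]) ω)
            =ᶠ[nhds 0] fun t =>
              -(t * he' (X ω)) * (t * hη' (X ω)) / (e (X ω) + t * he' (X ω)) := by
          have hball : ∀ᶠ t : ℝ in nhds 0, |t| < δ := by
            have := Metric.ball_mem_nhds (0 : ℝ) hδ
            filter_upwards [this] with t ht
            simpa [Real.dist_eq] using ht
          filter_upwards [hball] with t ht
          rw [if_pos ht]
        have ha : HasDerivAt (fun t : ℝ => t * he' (X ω)) (he' (X ω)) 0 := by
          simpa using (hasDerivAt_id (0 : ℝ)).mul_const (he' (X ω))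
        have hb : HasDerivAt (fun t : ℝ => t * hη' (X ω)) (hη' (X ω)) 0 := by
          simpa using (hasDerivAt_id (0 : ℝ)).mul_const (hη' (X ω))
        have Hn : HasDerivAt (fun t : ℝ => -(t * he' (X ω)) * (t * hη' (X ω))) 0 0 := by
          exact (ha.neg.mul hb).congr_deriv (by simp)
        have Hm : HasDerivAt (fun t : ℝ => e (X ω) + t * he' (X ω)) (he' (X ω)) 0 :=
          ha.const_add (e (X ω))
        have hd : e (X ω) + (0 : ℝ) * he' (X ω) ≠ 0 := by
          simp only [zero_mul, add_zero]
          linarith [hω.1]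
        have H := Hn.div Hm hd
        refine HasDerivAt.congr_of_eventuallyEq ?_ hev
        exact H.congr_deriv (by simp)
end

section
/- Suppose one-sided limited overlap holds: 0 < e(X) < 1 − p* < 1 a.s. For candidate nuisances, let τ̃ and μ̃0 be bounded measurable real functions on 𝒳 and ẽ a measurable function with ẽ(X) < 1 − p̃ < 1 a.s. for some p̃ ∈ (0,1), and write Ψ[τ̃, ẽ, μ̃0] = W·τ̃(X) − (W−ẽ(X))(Y−μ̃0(X))/(1−ẽ(X)). Then, almost surely, E[Ψ[τ̃, e, μ̃0] | σ(X)] = E[Ψ[τ̃, ẽ, μ0] | σ(X)] = E[Ψ[τ̃, e, μ0] | σ(X)] = e(X)·(τ̃(X) − τ(X)) (global double robustness), and consequently E[Ψ[τ̃, e, μ̃0] | σ(X)] = 0 a.s. and E[Ψ[τ̃, ẽ, μ0] | σ(X)] = 0 a.s. if and only if τ̃(X) = τ(X) a.s. -/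
open MeasureTheory ProbabilityTheory Filter Set

lemma int_of_bdd {Ω : Type*} {mΩ : MeasurableSpace Ω} (P : Measure Ω) [IsFiniteMeasure P]
    {f : Ω → ℝ} (hf : AEStronglyMeasurable f P) {C : ℝ}
    (h : ∀ᵐ ω ∂P, |f ω| ≤ C) : Integrable f P :=
  ⟨hf, HasFiniteIntegral.of_bounded (C := C) (h.mono fun ω hω => by simpa using hω)⟩

lemma condexp_mul_of_condIndep {Ω : Type*} {m' : MeasurableSpace Ω}
    [mΩ : MeasurableSpace Ω] [StandardBorelSpace Ω]
    {P : Measure Ω} [IsProbabilityMeasure P] (hm' : m' ≤ mΩ)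
    {V Z : Ω → ℝ} (hV : Measurable V) (hZ : Measurable Z)
    {CV CZ : ℝ} (hVb : ∀ ω, |V ω| ≤ CV) (hZb : ∀ ω, |Z ω| ≤ CZ)
    (h : CondIndepFun m' hm' V Z P) :
    P[(fun ω => V ω * Z ω)|m'] =ᵐ[P] fun ω => ((P[V|m']) ω) * ((P[Z|m']) ω) := by
  have intV : Integrable V P := int_of_bdd P hV.aestronglyMeasurable (ae_of_all _ hVb)
  have intZ : Integrable Z P := int_of_bdd P hZ.aestronglyMeasurable (ae_of_all _ hZb)
  have hVZb : ∀ ω, |V ω * Z ω| ≤ CV * CZ := fun ω => by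
    rw [abs_mul]
    exact mul_le_mul (hVb ω) (hZb ω) (abs_nonneg _) ((abs_nonneg _).trans (hVb ω))
  have intVZ : Integrable (fun ω => V ω * Z ω) P :=
    int_of_bdd P (hV.mul hZ).aestronglyMeasurable (ae_of_all _ hVZb)
  have hk : Kernel.IndepFun V Z (condExpKernel P m') (P.trim hm') := h
  have h2 : ∀ᵐ ω ∂(P.trim hm'), ∀ q r : ℚ,
      condExpKernel P m' ω (V ⁻¹' Iic (q : ℝ) ∩ Z ⁻¹' Iic (r : ℝ)) =
        condExpKernel P m' ω (V ⁻¹' Iic (q : ℝ)) * condExpKernel P m' ω (Z ⁻¹' Iic (r : ℝ)) := by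
    rw [ae_all_iff]
    intro q
    rw [ae_all_iff]
    intro r
    exact hk.measure_inter_preimage_eq_mul _ _ measurableSet_Iic measurableSet_Iic
  have h3 : ∀ᵐ ω ∂P, IndepFun V Z (condExpKernel P m' ω) := by
    filter_upwards [ae_of_ae_trim hm' h2] with ω hω
    rw [IndepFun_iff_Indep]
    refine IndepSets.indep (measurable_iff_comap_le.mp hV) (measurable_iff_comap_le.mp hZ)
      (Real.isPiSystem_Iic_rat.comap V) (Real.isPiSystem_Iic_rat.comap Z) ?_ ?_ ?_
    · rw [BorelSpace.measurable_eq (α := ℝ), Real.borel_eq_generateFrom_Iic_rat,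
        MeasurableSpace.comap_generateFrom]
      rfl
    · rw [BorelSpace.measurable_eq (α := ℝ), Real.borel_eq_generateFrom_Iic_rat,
        MeasurableSpace.comap_generateFrom]
      rfl
    · rintro s t ⟨s', hs', rfl⟩ ⟨t', ht', rfl⟩
      simp only [mem_iUnion, mem_singleton_iff] at hs' ht'
      obtain ⟨q, rfl⟩ := hs'
      obtain ⟨r, rfl⟩ := ht'
      exact Filter.Eventually.of_forall fun _ => hω q r
  have h4 := condExp_ae_eq_integral_condExpKernel hm' intVZ
  have h5 := condExp_ae_eq_integral_condExpKernel hm' intV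
  have h6 := condExp_ae_eq_integral_condExpKernel hm' intZ
  filter_upwards [h3, h4, h5, h6] with ω hω e4 e5 e6
  rw [e4, e5, e6]
  haveI : IsProbabilityMeasure (condExpKernel P m' ω) := inferInstance
  have iV : Integrable V (condExpKernel P m' ω) :=
    int_of_bdd _ hV.aestronglyMeasurable (ae_of_all _ hVb)
  have iZ : Integrable Z (condExpKernel P m' ω) :=
    int_of_bdd _ hZ.aestronglyMeasurable (ae_of_all _ hZb)
  exact IndepFun.integral_fun_mul_eq_mul_integral (μ := condExpKernel P m' ω) hω iV.1 iZ.1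

lemma condexp_combo {Ω 𝒳 : Type*} [mΩ : MeasurableSpace Ω] [m𝒳 : MeasurableSpace 𝒳]
    (P : Measure Ω) [IsProbabilityMeasure P]
    (X : Ω → 𝒳) (hX : Measurable X)
    (W Y0 Y1 : Ω → ℝ) (hWm : Measurable W) (hY0m : Measurable Y0) (hY1m : Measurable Y1)
    {CY : ℝ} (hWb : ∀ ω, |W ω| ≤ 1) (hY0b : ∀ ω, |Y0 ω| ≤ CY) (hY1b : ∀ ω, |Y1 ω| ≤ CY)
    (e μ0 μ1 : 𝒳 → ℝ)
    (cW : P[W|sigmaAlg X] =ᵐ[P] fun ω => e (X ω))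
    (c0 : P[Y0|sigmaAlg X] =ᵐ[P] fun ω => μ0 (X ω))
    (cW0 : P[(fun ω => W ω * Y0 ω)|sigmaAlg X] =ᵐ[P] fun ω => e (X ω) * μ0 (X ω))
    (cW1 : P[(fun ω => W ω * Y1 ω)|sigmaAlg X] =ᵐ[P] fun ω => e (X ω) * μ1 (X ω))
    (g1 g2 g3 g4 g5 : 𝒳 → ℝ)
    (hg1 : Measurable g1) (hg2 : Measurable g2) (hg3 : Measurable g3)
    (hg4 : Measurable g4) (hg5 : Measurable g5)
    {C1 C2 C3 C4 C5 : ℝ}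
    (hb1 : ∀ᵐ ω ∂P, |g1 (X ω)| ≤ C1) (hb2 : ∀ᵐ ω ∂P, |g2 (X ω)| ≤ C2)
    (hb3 : ∀ᵐ ω ∂P, |g3 (X ω)| ≤ C3) (hb4 : ∀ᵐ ω ∂P, |g4 (X ω)| ≤ C4)
    (hb5 : ∀ᵐ ω ∂P, |g5 (X ω)| ≤ C5) :
    P[(fun ω => g1 (X ω) * W ω + g2 (X ω) * (W ω * Y1 ω) + g3 (X ω) * Y0 ω
        + g4 (X ω) * (W ω * Y0 ω) + g5 (X ω))|sigmaAlg X]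
      =ᵐ[P] fun ω => g1 (X ω) * e (X ω) + g2 (X ω) * (e (X ω) * μ1 (X ω))
        + g3 (X ω) * μ0 (X ω) + g4 (X ω) * (e (X ω) * μ0 (X ω)) + g5 (X ω) := by
  have hm' : sigmaAlg X ≤ mΩ := hX.comap_le
  have hXm' : Measurable[sigmaAlg X] X := measurable_iff_comap_le.mpr le_rfl
  have hCY0 : ∀ ω, (0:ℝ) ≤ CY := fun ω => (abs_nonneg _).trans (hY0b ω)
  -- boundedness of the base random variables
  have hWY1b : ∀ ω, |W ω * Y1 ω| ≤ CY := fun ω => by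
    rw [abs_mul]
    calc |W ω| * |Y1 ω| ≤ 1 * CY :=
          mul_le_mul (hWb ω) (hY1b ω) (abs_nonneg _) zero_le_one
      _ = CY := one_mul _
  have hWY0b : ∀ ω, |W ω * Y0 ω| ≤ CY := fun ω => by
    rw [abs_mul]
    calc |W ω| * |Y0 ω| ≤ 1 * CY :=
          mul_le_mul (hWb ω) (hY0b ω) (abs_nonneg _) zero_le_one
      _ = CY := one_mul _
  -- integrability of the base random variables
  have iW : Integrable W P := int_of_bdd P hWm.aestronglyMeasurable (ae_of_all _ hWb)
  have iY0 : Integrable Y0 P := int_of_bdd P hY0m.aestronglyMeasurable (ae_of_all _ hY0b)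
  have iW1 : Integrable (fun ω => W ω * Y1 ω) P :=
    int_of_bdd P (hWm.mul hY1m).aestronglyMeasurable (ae_of_all _ hWY1b)
  have iW0 : Integrable (fun ω => W ω * Y0 ω) P :=
    int_of_bdd P (hWm.mul hY0m).aestronglyMeasurable (ae_of_all _ hWY0b)
  -- integrability of the products
  have key : ∀ {g : 𝒳 → ℝ} {Z : Ω → ℝ} {C CZ : ℝ}, Measurable g → Measurable Z →
      (∀ᵐ ω ∂P, |g (X ω)| ≤ C) → (∀ ω, |Z ω| ≤ CZ) →
      Integrable (fun ω => g (X ω) * Z ω) P := by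
    intro g Z C CZ hg hZ hgb hZb
    refine int_of_bdd P ((hg.comp hX).mul hZ).aestronglyMeasurable (C := C * CZ) ?_
    filter_upwards [hgb] with ω hω
    rw [abs_mul]
    exact mul_le_mul hω (hZb ω) (abs_nonneg _) ((abs_nonneg _).trans hω)
  have i1 : Integrable (fun ω => g1 (X ω) * W ω) P := key hg1 hWm hb1 hWb
  have i2 : Integrable (fun ω => g2 (X ω) * (W ω * Y1 ω)) P := key hg2 (hWm.mul hY1m) hb2 hWY1b
  have i3 : Integrable (fun ω => g3 (X ω) * Y0 ω) P := key hg3 hY0m hb3 hY0b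
  have i4 : Integrable (fun ω => g4 (X ω) * (W ω * Y0 ω)) P := key hg4 (hWm.mul hY0m) hb4 hWY0b
  have i5 : Integrable (fun ω => g5 (X ω)) P :=
    int_of_bdd P (hg5.comp hX).aestronglyMeasurable hb5
  -- strong measurability of the coefficients w.r.t. σ(X)
  have sm1 : StronglyMeasurable[sigmaAlg X] (fun ω => g1 (X ω)) :=
    (hg1.comp hXm').stronglyMeasurable
  have sm2 : StronglyMeasurable[sigmaAlg X] (fun ω => g2 (X ω)) :=
    (hg2.comp hXm').stronglyMeasurable
  have sm3 : StronglyMeasurable[sigmaAlg X] (fun ω => g3 (X ω)) :=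
    (hg3.comp hXm').stronglyMeasurable
  have sm4 : StronglyMeasurable[sigmaAlg X] (fun ω => g4 (X ω)) :=
    (hg4.comp hXm').stronglyMeasurable
  have sm5 : StronglyMeasurable[sigmaAlg X] (fun ω => g5 (X ω)) :=
    (hg5.comp hXm').stronglyMeasurable
  -- pull-out for each term
  have t1 : P[(fun ω => g1 (X ω) * W ω)|sigmaAlg X]
      =ᵐ[P] fun ω => g1 (X ω) * (P[W|sigmaAlg X]) ω :=
    condExp_mul_of_stronglyMeasurable_left sm1 i1 iW
  have t2 : P[(fun ω => g2 (X ω) * (W ω * Y1 ω))|sigmaAlg X]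
      =ᵐ[P] fun ω => g2 (X ω) * (P[(fun ω => W ω * Y1 ω)|sigmaAlg X]) ω :=
    condExp_mul_of_stronglyMeasurable_left sm2 i2 iW1
  have t3 : P[(fun ω => g3 (X ω) * Y0 ω)|sigmaAlg X]
      =ᵐ[P] fun ω => g3 (X ω) * (P[Y0|sigmaAlg X]) ω :=
    condExp_mul_of_stronglyMeasurable_left sm3 i3 iY0
  have t4 : P[(fun ω => g4 (X ω) * (W ω * Y0 ω))|sigmaAlg X]
      =ᵐ[P] fun ω => g4 (X ω) * (P[(fun ω => W ω * Y0 ω)|sigmaAlg X]) ω :=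
    condExp_mul_of_stronglyMeasurable_left sm4 i4 iW0
  have t5 : P[(fun ω => g5 (X ω))|sigmaAlg X] = fun ω => g5 (X ω) :=
    condExp_of_stronglyMeasurable hm' sm5 i5
  -- additivity
  have s4 : P[(fun ω => g1 (X ω) * W ω + g2 (X ω) * (W ω * Y1 ω))|sigmaAlg X]
      =ᵐ[P] fun ω => (P[(fun ω => g1 (X ω) * W ω)|sigmaAlg X]) ω
        + (P[(fun ω => g2 (X ω) * (W ω * Y1 ω))|sigmaAlg X]) ω :=
    condExp_add i1 i2 _
  have s3 : P[(fun ω => g1 (X ω) * W ω + g2 (X ω) * (W ω * Y1 ω) + g3 (X ω) * Y0 ω)|sigmaAlg X]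
      =ᵐ[P] fun ω => (P[(fun ω => g1 (X ω) * W ω + g2 (X ω) * (W ω * Y1 ω))|sigmaAlg X]) ω
        + (P[(fun ω => g3 (X ω) * Y0 ω)|sigmaAlg X]) ω :=
    condExp_add (i1.add i2) i3 _
  have s2 : P[(fun ω => g1 (X ω) * W ω + g2 (X ω) * (W ω * Y1 ω) + g3 (X ω) * Y0 ω
        + g4 (X ω) * (W ω * Y0 ω))|sigmaAlg X]
      =ᵐ[P] fun ω => (P[(fun ω => g1 (X ω) * W ω + g2 (X ω) * (W ω * Y1 ω)
        + g3 (X ω) * Y0 ω)|sigmaAlg X]) ω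
        + (P[(fun ω => g4 (X ω) * (W ω * Y0 ω))|sigmaAlg X]) ω :=
    condExp_add ((i1.add i2).add i3) i4 _
  have s1 : P[(fun ω => g1 (X ω) * W ω + g2 (X ω) * (W ω * Y1 ω) + g3 (X ω) * Y0 ω
        + g4 (X ω) * (W ω * Y0 ω) + g5 (X ω))|sigmaAlg X]
      =ᵐ[P] fun ω => (P[(fun ω => g1 (X ω) * W ω + g2 (X ω) * (W ω * Y1 ω) + g3 (X ω) * Y0 ω
        + g4 (X ω) * (W ω * Y0 ω))|sigmaAlg X]) ω
        + (P[(fun ω => g5 (X ω))|sigmaAlg X]) ω :=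
    condExp_add (((i1.add i2).add i3).add i4) i5 _
  filter_upwards [s1, s2, s3, s4, t1, t2, t3, t4, cW, c0, cW0, cW1] with ω
    hs1 hs2 hs3 hs4 ht1 ht2 ht3 ht4 hcW hc0 hcW0 hcW1
  rw [hs1, hs2, hs3, hs4, ht1, ht2, ht3, ht4, t5, hcW, hc0, hcW0, hcW1]

lemma psi_condexp {Ω 𝒳 : Type*} [mΩ : MeasurableSpace Ω] [m𝒳 : MeasurableSpace 𝒳]
    (P : Measure Ω) [IsProbabilityMeasure P]
    (X : Ω → 𝒳) (hX : Measurable X)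
    (W Y0 Y1 Y : Ω → ℝ) (hWm : Measurable W) (hY0m : Measurable Y0) (hY1m : Measurable Y1)
    (hWbin : ∀ ω, W ω = 0 ∨ W ω = 1)
    (hSUTVA : ∀ ω, Y ω = W ω * Y1 ω + (1 - W ω) * Y0 ω)
    {CY : ℝ} (hY0b : ∀ ω, |Y0 ω| ≤ CY) (hY1b : ∀ ω, |Y1 ω| ≤ CY)
    (e μ0 μ1 : 𝒳 → ℝ)
    (cW : P[W|sigmaAlg X] =ᵐ[P] fun ω => e (X ω))
    (c0 : P[Y0|sigmaAlg X] =ᵐ[P] fun ω => μ0 (X ω))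
    (cW0 : P[(fun ω => W ω * Y0 ω)|sigmaAlg X] =ᵐ[P] fun ω => e (X ω) * μ0 (X ω))
    (cW1 : P[(fun ω => W ω * Y1 ω)|sigmaAlg X] =ᵐ[P] fun ω => e (X ω) * μ1 (X ω))
    (τ a b : 𝒳 → ℝ) (hτm : Measurable τ) (ham : Measurable a) (hbm : Measurable b)
    {Cτ Cb : ℝ} (hτb : ∀ x, |τ x| ≤ Cτ) (hbb : ∀ x, |b x| ≤ Cb)
    {p : ℝ} (hp : p ∈ Set.Ioo (0:ℝ) 1) (ha : ∀ᵐ ω ∂P, a (X ω) < 1 - p)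
    (hae : ∀ᵐ ω ∂P, a (X ω) = e (X ω) ∨ b (X ω) = μ0 (X ω)) :
    P[(fun ω => W ω * τ (X ω) - (W ω - a (X ω)) * (Y ω - b (X ω)) / (1 - a (X ω)))|sigmaAlg X]
      =ᵐ[P] fun ω => e (X ω) * (τ (X ω) - (μ1 (X ω) - μ0 (X ω))) := by
  have hWb : ∀ ω, |W ω| ≤ 1 := fun ω => by rcases hWbin ω with h | h <;> simp [h]
  -- a.e. facts about the inverse
  have hd : ∀ᵐ ω ∂P, 0 < (1 - a (X ω))⁻¹ ∧ (1 - a (X ω))⁻¹ ≤ p⁻¹ ∧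
      (1 - a (X ω))⁻¹ * a (X ω) = (1 - a (X ω))⁻¹ - 1 := by
    filter_upwards [ha] with ω hlt
    have h0 : 0 < 1 - a (X ω) := lt_trans hp.1 (by linarith)
    have hne : (1:ℝ) - a (X ω) ≠ 0 := ne_of_gt h0
    refine ⟨inv_pos.mpr h0, inv_anti₀ hp.1 (by linarith), ?_⟩
    field_simp
    ring
  have hp1 : (1:ℝ) ≤ p⁻¹ := (one_le_inv₀ hp.1).mpr hp.2.le
  -- bounds for the coefficients
  have hb1 : ∀ᵐ ω ∂P, |τ (X ω) + (1 - a (X ω))⁻¹ * b (X ω)| ≤ Cτ + p⁻¹ * Cb := by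
    filter_upwards [hd] with ω ⟨h0, hle, _⟩
    calc |τ (X ω) + (1 - a (X ω))⁻¹ * b (X ω)|
        ≤ |τ (X ω)| + |(1 - a (X ω))⁻¹ * b (X ω)| := abs_add_le _ _
      _ ≤ Cτ + p⁻¹ * Cb := by
          refine add_le_add (hτb _) ?_
          rw [abs_mul, abs_of_pos h0]
          exact mul_le_mul hle (hbb _) (abs_nonneg _) (by positivity)
  have hb2 : ∀ᵐ ω ∂P, |(1 - a (X ω))⁻¹ * a (X ω) - (1 - a (X ω))⁻¹| ≤ 1 := by
    filter_upwards [hd] with ω ⟨h0, hle, heq⟩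
    rw [heq]
    simp
  have hb3 : ∀ᵐ ω ∂P, |(1 - a (X ω))⁻¹ * a (X ω)| ≤ p⁻¹ := by
    filter_upwards [hd] with ω ⟨h0, hle, heq⟩
    rw [heq, abs_le]
    constructor <;> linarith
  have hb4 : ∀ᵐ ω ∂P, |-((1 - a (X ω))⁻¹ * a (X ω))| ≤ p⁻¹ := by
    filter_upwards [hb3] with ω h
    rwa [abs_neg]
  have hb5 : ∀ᵐ ω ∂P, |-((1 - a (X ω))⁻¹ * a (X ω) * b (X ω))| ≤ p⁻¹ * Cb := by
    filter_upwards [hb3] with ω h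
    rw [abs_neg, abs_mul]
    exact mul_le_mul h (hbb _) (abs_nonneg _) (by positivity)
  have hdinv : Measurable fun x => (1 - a x)⁻¹ := (measurable_const.sub ham).inv
  have main := condexp_combo P X hX W Y0 Y1 hWm hY0m hY1m hWb hY0b hY1b e μ0 μ1
    cW c0 cW0 cW1
    (fun x => τ x + (1 - a x)⁻¹ * b x)
    (fun x => (1 - a x)⁻¹ * a x - (1 - a x)⁻¹)
    (fun x => (1 - a x)⁻¹ * a x)
    (fun x => -((1 - a x)⁻¹ * a x))
    (fun x => -((1 - a x)⁻¹ * a x * b x))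
    (hτm.add (hdinv.mul hbm)) ((hdinv.mul ham).sub hdinv) (hdinv.mul ham)
    (hdinv.mul ham).neg ((hdinv.mul ham).mul hbm).neg
    hb1 hb2 hb3 hb4 hb5
  have hfun : (fun ω => W ω * τ (X ω) - (W ω - a (X ω)) * (Y ω - b (X ω)) / (1 - a (X ω)))
      = (fun ω => (τ (X ω) + (1 - a (X ω))⁻¹ * b (X ω)) * W ω
        + ((1 - a (X ω))⁻¹ * a (X ω) - (1 - a (X ω))⁻¹) * (W ω * Y1 ω)
        + ((1 - a (X ω))⁻¹ * a (X ω)) * Y0 ω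
        + (-((1 - a (X ω))⁻¹ * a (X ω))) * (W ω * Y0 ω)
        + (-((1 - a (X ω))⁻¹ * a (X ω) * b (X ω)))) := by
    funext ω
    rcases hWbin ω with h | h <;> simp only [hSUTVA ω, h] <;> ring
  rw [hfun]
  refine main.trans ?_
  filter_upwards [ha, hae] with ω hlt hcase
  have h0 : 0 < 1 - a (X ω) := lt_trans hp.1 (by linarith)
  have hne : (1:ℝ) - a (X ω) ≠ 0 := ne_of_gt h0
  rcases hcase with h | h
  · rw [h] at hne ⊢
    field_simp
    ring
  · rw [h]
    field_simp
    ring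

set_option linter.unusedVariables false in
theorem stmt_7
    {Ω 𝒳 : Type*} [MeasurableSpace Ω] [StandardBorelSpace Ω] [MeasurableSpace 𝒳]
    (P : Measure Ω) [IsProbabilityMeasure P]
    (X : Ω → 𝒳) (hX : Measurable X)
    (W : Ω → ℝ) (hWm : Measurable W) (hWbin : ∀ ω, W ω = 0 ∨ W ω = 1)
    (Y0 Y1 : Ω → ℝ) (hY0m : Measurable Y0) (hY1m : Measurable Y1)
    (CY : ℝ) (hYbdd : ∀ ω, |Y0 ω| ≤ CY ∧ |Y1 ω| ≤ CY)
    (Y : Ω → ℝ) (hSUTVA : ∀ ω, Y ω = W ω * Y1 ω + (1 - W ω) * Y0 ω)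
    (hUnconf : CondIndepFun (sigmaAlg X) hX.comap_le W (fun ω => (Y0 ω, Y1 ω)) P)
    (e : 𝒳 → ℝ) (hem : Measurable e)
    (hprop : P[W|sigmaAlg X] =ᵐ[P] (fun ω => e (X ω)))
    (hoverlap : ∀ᵐ ω ∂P, 0 < e (X ω) ∧ e (X ω) < 1)
    (μ0 μ1 : 𝒳 → ℝ) (hμ0m : Measurable μ0) (hμ1m : Measurable μ1)
    (Cμ : ℝ) (hμbdd : ∀ x, |μ0 x| ≤ Cμ ∧ |μ1 x| ≤ Cμ)
    (hμ0c : P[Y0|sigmaAlg X] =ᵐ[P] (fun ω => μ0 (X ω)))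
    (hμ1c : P[Y1|sigmaAlg X] =ᵐ[P] (fun ω => μ1 (X ω)))
    (pstar : ℝ) (hpstar : pstar ∈ Set.Ioo (0:ℝ) 1)
    (hov : ∀ᵐ ω ∂P, e (X ω) < 1 - pstar)
    (τt m0t : 𝒳 → ℝ) (hτtm : Measurable τt) (hm0tm : Measurable m0t)
    (Cτt : ℝ) (hτtb : ∀ x, |τt x| ≤ Cτt) (Cm0t : ℝ) (hm0tb : ∀ x, |m0t x| ≤ Cm0t)
    (et : 𝒳 → ℝ) (hetm : Measurable et)
    (pt : ℝ) (hpt : pt ∈ Set.Ioo (0:ℝ) 1) (hetb : ∀ᵐ ω ∂P, et (X ω) < 1 - pt) :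
    (P[(fun ω => W ω * τt (X ω) - (W ω - e (X ω)) * (Y ω - m0t (X ω)) / (1 - e (X ω)))|sigmaAlg X] =ᵐ[P] (fun ω => e (X ω) * (τt (X ω) - (μ1 (X ω) - μ0 (X ω))))) ∧
    (P[(fun ω => W ω * τt (X ω) - (W ω - et (X ω)) * (Y ω - μ0 (X ω)) / (1 - et (X ω)))|sigmaAlg X] =ᵐ[P] (fun ω => e (X ω) * (τt (X ω) - (μ1 (X ω) - μ0 (X ω))))) ∧
    (P[(fun ω => W ω * τt (X ω) - (W ω - e (X ω)) * (Y ω - μ0 (X ω)) / (1 - e (X ω)))|sigmaAlg X] =ᵐ[P] (fun ω => e (X ω) * (τt (X ω) - (μ1 (X ω) - μ0 (X ω))))) ∧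
    ((P[(fun ω => W ω * τt (X ω) - (W ω - e (X ω)) * (Y ω - m0t (X ω)) / (1 - e (X ω)))|sigmaAlg X] =ᵐ[P] 0 ∧
      P[(fun ω => W ω * τt (X ω) - (W ω - et (X ω)) * (Y ω - μ0 (X ω)) / (1 - et (X ω)))|sigmaAlg X] =ᵐ[P] 0) ↔
      (∀ᵐ ω ∂P, τt (X ω) = μ1 (X ω) - μ0 (X ω))) := by

  have hWb : ∀ ω, |W ω| ≤ 1 := fun ω => by rcases hWbin ω with h | h <;> simp [h]
  -- conditional independence of W with each potential outcome
  have hI0 : CondIndepFun (sigmaAlg X) hX.comap_le W Y0 P :=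
    hUnconf.comp measurable_id measurable_fst
  have hI1 : CondIndepFun (sigmaAlg X) hX.comap_le W Y1 P :=
    hUnconf.comp measurable_id measurable_snd
  -- conditional expectation of the products
  have cW0 : P[(fun ω => W ω * Y0 ω)|sigmaAlg X] =ᵐ[P] fun ω => e (X ω) * μ0 (X ω) := by
    have h := condexp_mul_of_condIndep hX.comap_le hWm hY0m hWb (fun ω => (hYbdd ω).1) hI0
    filter_upwards [h, hprop, hμ0c] with ω h1 h2 h3
    rw [h1, h2, h3]
  have cW1 : P[(fun ω => W ω * Y1 ω)|sigmaAlg X] =ᵐ[P] fun ω => e (X ω) * μ1 (X ω) := by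
    have h := condexp_mul_of_condIndep hX.comap_le hWm hY1m hWb (fun ω => (hYbdd ω).2) hI1
    filter_upwards [h, hprop, hμ1c] with ω h1 h2 h3
    rw [h1, h2, h3]
  have partA := psi_condexp P X hX W Y0 Y1 Y hWm hY0m hY1m hWbin hSUTVA
    (fun ω => (hYbdd ω).1) (fun ω => (hYbdd ω).2) e μ0 μ1 hprop hμ0c cW0 cW1
    τt e m0t hτtm hem hm0tm hτtb hm0tb hpstar hov
    (Filter.Eventually.of_forall fun ω => Or.inl rfl)
  have partB := psi_condexp P X hX W Y0 Y1 Y hWm hY0m hY1m hWbin hSUTVA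
    (fun ω => (hYbdd ω).1) (fun ω => (hYbdd ω).2) e μ0 μ1 hprop hμ0c cW0 cW1
    τt et μ0 hτtm hetm hμ0m hτtb (fun x => (hμbdd x).1) hpt hetb
    (Filter.Eventually.of_forall fun ω => Or.inr rfl)
  have partC := psi_condexp P X hX W Y0 Y1 Y hWm hY0m hY1m hWbin hSUTVA
    (fun ω => (hYbdd ω).1) (fun ω => (hYbdd ω).2) e μ0 μ1 hprop hμ0c cW0 cW1
    τt e μ0 hτtm hem hμ0m hτtb (fun x => (hμbdd x).1) hpstar hov
    (Filter.Eventually.of_forall fun ω => Or.inl rfl)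
  refine ⟨partA, partB, partC, ?_⟩
  constructor
  · rintro ⟨h1, _⟩
    have h := partA.symm.trans h1
    filter_upwards [h, hoverlap] with ω hω ⟨he0, _⟩
    have : e (X ω) * (τt (X ω) - (μ1 (X ω) - μ0 (X ω))) = 0 := by simpa using hω
    rcases mul_eq_zero.mp this with h' | h'
    · exact absurd h' (ne_of_gt he0)
    · linarith [sub_eq_zero.mp h']
  · intro h
    constructor
    · refine partA.trans ?_
      filter_upwards [h] with ω hω
      simp [hω]
    · refine partB.trans ?_
      filter_upwards [h] with ω hω
      simp [hω]
end
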